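/- arXiv:2210.13062 — 7 statements merged into one kernel-verified Lean document; each statement's English description precedes it below -/
import Mathlib

section
/- An MSC M = (E, →, ◁, λ) is an n-1 (mailbox) MSC if and only if the relation ≺_mb := (→ ∪ ◁ ∪ ↦_mb)⁺ is irreflexive (equivalently, the relation → ∪ ◁ ∪ ↦_mb is acyclic). -/
namespace MSCPaper

/-- A communication action: either `send p q m` (process `p` sends message `m`
to process `q`) or `recv p q m` (process `q` receives message `m` from `p`). -/
inductive Action (P Msg : Type) : Type where
  | send (p q : P) (m : Msg) : Action P Msg
  | recv (p q : P) (m : Msg) : Action P Msg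

namespace Action

variable {P Msg : Type}

/-- The process executing an action: the sender of a send, the receiver of a receive. -/
def exec : Action P Msg → P
  | send p _ _ => p
  | recv _ q _ => q

def isSend (a : Action P Msg) : Prop := ∃ p q m, a = send p q m

def isRecv (a : Action P Msg) : Prop := ∃ p q m, a = recv p q m

/-- `a` is a send action whose destination is `q`. -/
def sendTo (a : Action P Msg) (q : P) : Prop := ∃ p m, a = send p q m

/-- `a` is a send action from `p` to `q`. -/
def isSendFromTo (a : Action P Msg) (p q : P) : Prop := ∃ m, a = send p q m

/-- `a` is a receive action of a message from `p` to `q`. -/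
def isRecvFromTo (a : Action P Msg) (p q : P) : Prop := ∃ m, a = recv p q m

end Action

/-- The data of a message sequence chart: a set of events `E`, the process
successor relation `next` (→), the message relation `msg` (◁), and the
labelling `lbl` (λ). -/
structure PreMSC (P Msg : Type) where
  E : Type
  next : E → E → Prop
  msg : E → E → Prop
  lbl : E → Action P Msg

namespace PreMSC

variable {P Msg : Type}

/-- One step of the happens-before relation: `→ ∪ ◁`. -/
def step (M : PreMSC P Msg) (a b : M.E) : Prop := M.next a b ∨ M.msg a b

/-- The happens-before relation `≤ := (→ ∪ ◁)*`. -/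
def hb (M : PreMSC P Msg) : M.E → M.E → Prop := Relation.ReflTransGen M.step

/-- The strict happens-before relation `< := (→ ∪ ◁)⁺`. -/
def shb (M : PreMSC P Msg) : M.E → M.E → Prop := Relation.TransGen M.step

/-- An event is matched if it has a `◁`-successor. -/
def Matched (M : PreMSC P Msg) (e : M.E) : Prop := ∃ f, M.msg e f

/-- The axioms making a `PreMSC` an MSC. -/
structure IsMSC (M : PreMSC P Msg) : Prop where
  /-- The set of events is finite. -/
  finite : Finite M.E
  /-- `next` only relates events executed by the same process. -/
  next_exec : ∀ e f, M.next e f → (M.lbl e).exec = (M.lbl f).exec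
  /-- Events executed by the same process are totally ordered by `next⁺`. -/
  proc_total : ∀ e f, (M.lbl e).exec = (M.lbl f).exec → e ≠ f →
    Relation.TransGen M.next e f ∨ Relation.TransGen M.next f e
  /-- `next` is the immediate successor relation of the total order `next⁺`
  on each process line. -/
  next_cover : ∀ e f, M.next e f →
    ¬ ∃ g, Relation.TransGen M.next e g ∧ Relation.TransGen M.next g f
  /-- `◁` relates matching send/receive events. -/
  msg_lbl : ∀ e f, M.msg e f → ∃ p q m, M.lbl e = .send p q m ∧ M.lbl f = .recv p q m
  /-- Every receive event has exactly one `◁`-predecessor. -/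
  recv_matched : ∀ f, (M.lbl f).isRecv → ∃! e, M.msg e f
  /-- Every event has at most one `◁`-successor. -/
  msg_functional : ∀ e f f', M.msg e f → M.msg e f' → f = f'
  /-- The happens-before relation `(→ ∪ ◁)*` is a partial order, i.e. the
  relation `→ ∪ ◁` is acyclic. -/
  hb_po : ∀ e, ¬ Relation.TransGen M.step e e

/-- `lin` is a linearization of `M`: a reflexive total order containing
happens-before. -/
structure IsLin (M : PreMSC P Msg) (lin : M.E → M.E → Prop) : Prop where
  refl : ∀ e, lin e e
  trans : ∀ e f g, lin e f → lin f g → lin e g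
  antisymm : ∀ e f, lin e f → lin f e → e = f
  total : ∀ e f, lin e f ∨ lin f e
  hb_le : ∀ e f, M.hb e f → lin e f

/-- `lin` satisfies the mailbox (n-1) condition: any two sends to the same
destination in `lin`-order are either both matched with receives in the same
order, or the later one is unmatched. -/
def MailboxCond (M : PreMSC P Msg) (lin : M.E → M.E → Prop) : Prop :=
  ∀ s s' q, (M.lbl s).sendTo q → (M.lbl s').sendTo q → lin s s' →
    (∃ r r', M.msg s r ∧ M.msg s' r' ∧ lin r r') ∨ ¬ M.Matched s'

/-- `lin` satisfies the 1-n condition: any two sends executed by the same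
process, in process order, are either both matched with receives in the same
`lin`-order, or the later one is unmatched. -/
def OneNCond (M : PreMSC P Msg) (lin : M.E → M.E → Prop) : Prop :=
  ∀ s s', (M.lbl s).isSend → (M.lbl s').isSend →
    (M.lbl s).exec = (M.lbl s').exec → Relation.TransGen M.next s s' →
    (∃ r r', M.msg s r ∧ M.msg s' r' ∧ lin r r') ∨ ¬ M.Matched s'

/-- `lin` satisfies the n-n condition: any two sends in `lin`-order are either
both matched with receives in the same `lin`-order, or the later one is
unmatched. -/
def NNCond (M : PreMSC P Msg) (lin : M.E → M.E → Prop) : Prop :=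
  ∀ s s', (M.lbl s).isSend → (M.lbl s').isSend → lin s s' →
    (∃ r r', M.msg s r ∧ M.msg s' r' ∧ lin r r') ∨ ¬ M.Matched s'

/-- An n-1 (mailbox) MSC: one having a mailbox linearization. -/
def IsMailbox (M : PreMSC P Msg) : Prop := ∃ lin, M.IsLin lin ∧ M.MailboxCond lin

/-- A 1-n MSC: one having a 1-n linearization. -/
def IsOneN (M : PreMSC P Msg) : Prop := ∃ lin, M.IsLin lin ∧ M.OneNCond lin

/-- An n-n MSC: one having an n-n linearization. -/
def IsNN (M : PreMSC P Msg) : Prop := ∃ lin, M.IsLin lin ∧ M.NNCond lin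

/-- A peer-to-peer (1-1) MSC. -/
def IsPP (M : PreMSC P Msg) : Prop :=
  ∀ s s' p q, (M.lbl s).isSendFromTo p q → (M.lbl s').isSendFromTo p q →
    Relation.TransGen M.next s s' →
    (∃ r r', M.msg s r ∧ M.msg s' r' ∧ Relation.TransGen M.next r r') ∨ ¬ M.Matched s'

/-- A causally ordered MSC. -/
def IsCO (M : PreMSC P Msg) : Prop :=
  ∀ s s' q, (M.lbl s).sendTo q → (M.lbl s').sendTo q → M.hb s s' →
    (∃ r r', M.msg s r ∧ M.msg s' r' ∧ Relation.ReflTransGen M.next r r') ∨ ¬ M.Matched s'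

/-- An RSC MSC: no unmatched send events and some linearization in which every
send is immediately followed by its matching receive. -/
def IsRSC (M : PreMSC P Msg) : Prop :=
  (∀ e, (M.lbl e).isSend → M.Matched e) ∧
  ∃ lin, M.IsLin lin ∧
    ∀ s r, M.msg s r → lin s r ∧ ∀ e, lin s e → lin e r → e = s ∨ e = r

/-- The relation `↦_mb`. -/
def mbRel (M : PreMSC P Msg) (s s' : M.E) : Prop :=
  (∃ q, (M.lbl s).sendTo q ∧ (M.lbl s').sendTo q) ∧
  ((M.Matched s ∧ ¬ M.Matched s') ∨
    ∃ r₁ r₂, M.msg s r₁ ∧ M.msg s' r₂ ∧ Relation.TransGen M.next r₁ r₂)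

/-- The relation `↦_1n`. -/
def onenRel (M : PreMSC P Msg) (e₁ e₂ : M.E) : Prop :=
  ((M.lbl e₁).isSend ∧ (M.lbl e₂).isSend ∧ (M.lbl e₁).exec = (M.lbl e₂).exec ∧
    M.Matched e₁ ∧ ¬ M.Matched e₂) ∨
  (∃ s₁ s₂, M.msg s₁ e₁ ∧ M.msg s₂ e₂ ∧ (M.lbl s₁).exec = (M.lbl s₂).exec ∧
    Relation.TransGen M.next s₁ s₂)

/-- One step of `≺_mb`: the relation `→ ∪ ◁ ∪ ↦_mb`. -/
def mbStep (M : PreMSC P Msg) (a b : M.E) : Prop := M.next a b ∨ M.msg a b ∨ M.mbRel a b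

/-- One step of `⪯_1n`: the relation `→ ∪ ◁ ∪ ↦_1n`. -/
def onenStep (M : PreMSC P Msg) (a b : M.E) : Prop := M.next a b ∨ M.msg a b ∨ M.onenRel a b

/-- One step of `◅`: the relation `→ ∪ ◁ ∪ ↦_mb ∪ ↦_1n`. -/
def nnStep (M : PreMSC P Msg) (a b : M.E) : Prop :=
  M.next a b ∨ M.msg a b ∨ M.mbRel a b ∨ M.onenRel a b

/-- The relation `◅ := (→ ∪ ◁ ∪ ↦_mb ∪ ↦_1n)⁺`. -/
def nnRel (M : PreMSC P Msg) : M.E → M.E → Prop := Relation.TransGen M.nnStep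

/-- The relation `⋈`. -/
def nnBowtie (M : PreMSC P Msg) (e₁ e₂ : M.E) : Prop :=
  M.nnRel e₁ e₂ ∨
  ((∃ s₁ s₂, M.msg s₁ e₁ ∧ M.msg s₂ e₂ ∧ M.nnRel s₁ s₂) ∧ ¬ M.nnRel e₁ e₂) ∨
  ((∃ r₁ r₂, M.msg e₁ r₁ ∧ M.msg e₂ r₂ ∧ M.nnRel r₁ r₂) ∧ ¬ M.nnRel e₁ e₂) ∨
  ((M.lbl e₁).isSend ∧ M.Matched e₁ ∧ (M.lbl e₂).isSend ∧ ¬ M.Matched e₂ ∧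
    ¬ M.nnRel e₁ e₂)

/-- `lin` is `k`-bounded: for every send event `e` from `p` to `q`, the number
of sends from `p` to `q` up to `e` minus the number of receives of messages
from `p` to `q` up to `e` is at most `k`. -/
def KBounded (M : PreMSC P Msg) (k : ℕ) (lin : M.E → M.E → Prop) : Prop :=
  ∀ e p q m, M.lbl e = .send p q m →
    Set.ncard {f | lin f e ∧ (M.lbl f).isSendFromTo p q} ≤
      Set.ncard {f | lin f e ∧ (M.lbl f).isRecvFromTo p q} + k

/-- The relation `R_k` (`⇝_k` of Lohrey–Muscholl, asynchronous version):
`r R_k s` iff there is a chain `s₁ →⁺ … →⁺ s_k →⁺ s` of sends from `p` to `q`,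
at least one of them matched, `r` is a receive matching one of them, and `r`
is `→*`-before every receive matching one of them. -/
def RkRel (M : PreMSC P Msg) (k : ℕ) (r s : M.E) : Prop :=
  ∃ (p q : P) (σ : Fin (k + 1) → M.E),
    σ (Fin.last k) = s ∧
    (∀ i : Fin k, Relation.TransGen M.next (σ i.castSucc) (σ i.succ)) ∧
    (∀ i, (M.lbl (σ i)).isSendFromTo p q) ∧
    (∃ i, M.Matched (σ i)) ∧
    (∃ i, M.msg (σ i) r) ∧
    (∀ i f, M.msg (σ i) f → Relation.ReflTransGen M.next r f)

/-- `e` is the `n`-th (1-indexed) send event of channel `(p,q)`. -/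
def nthSend (M : PreMSC P Msg) (p q : P) (n : ℕ) (e : M.E) : Prop :=
  (M.lbl e).isSendFromTo p q ∧
  Set.ncard {f | (M.lbl f).isSendFromTo p q ∧ Relation.ReflTransGen M.next f e} = n

/-- `e` is the `n`-th (1-indexed) receive event of channel `(p,q)`. -/
def nthRecv (M : PreMSC P Msg) (p q : P) (n : ℕ) (e : M.E) : Prop :=
  (M.lbl e).isRecvFromTo p q ∧
  Set.ncard {f | (M.lbl f).isRecvFromTo p q ∧ Relation.ReflTransGen M.next f e} = n

/-- The relation `≺_B` for bound `k`: `r ≺_B s` iff for some `i ≥ 1` and some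
channel `(p,q)`, `r` is the `i`-th receive and `s` the `(i+k)`-th send of `(p,q)`. -/
def BRel (M : PreMSC P Msg) (k : ℕ) (r s : M.E) : Prop :=
  ∃ (p q : P) (i : ℕ), 1 ≤ i ∧ M.nthRecv p q i r ∧ M.nthSend p q (i + k) s

/-- For every channel `(p,q)` there are at most `k` unmatched sends from `p` to `q`. -/
def UnmatchedBounded (M : PreMSC P Msg) (k : ℕ) : Prop :=
  ∀ p q : P, Set.ncard {e | (M.lbl e).isSendFromTo p q ∧ ¬ M.Matched e} ≤ k

/-- The restriction of an MSC to a subset of its events. -/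
def restrict (M : PreMSC P Msg) (S : Set M.E) : PreMSC P Msg where
  E := S
  next := fun a b => M.next a.val b.val
  msg := fun a b => M.msg a.val b.val
  lbl := fun a => M.lbl a.val

/-- `S` is downward-closed for happens-before. -/
def DownClosed (M : PreMSC P Msg) (S : Set M.E) : Prop :=
  ∀ e f, M.hb e f → f ∈ S → e ∈ S

/-- `S` is downward-closed for `⪯_1n := (→ ∪ ◁ ∪ ↦_1n)*`. -/
def OneNDownClosed (M : PreMSC P Msg) (S : Set M.E) : Prop :=
  ∀ e f, Relation.ReflTransGen M.onenStep e f → f ∈ S → e ∈ S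

/-- The MSC contains a crown: a cyclic sequence of matched message pairs
`(s_i, r_i)`, of length at least 2, with `s_i < r_{i+1}` (indices mod `k`). -/
def HasCrown (M : PreMSC P Msg) : Prop :=
  ∃ (k : ℕ) (hk : 2 ≤ k) (s r : Fin k → M.E),
    (∀ i, M.msg (s i) (r i)) ∧
    ∀ i : Fin k, M.shb (s i) (r ⟨(i.val + 1) % k, Nat.mod_lt _ (by omega)⟩)

end PreMSC

end MSCPaper

namespace MSCPaper

/-- An MSC is an n-1 (mailbox) MSC iff
`≺_mb := (→ ∪ ◁ ∪ ↦_mb)⁺` is irreflexive (i.e. `→ ∪ ◁ ∪ ↦_mb` is acyclic). -/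
theorem mailbox_iff_mbStep_acyclic {P Msg : Type} (M : PreMSC P Msg) (hM : M.IsMSC) :
    M.IsMailbox ↔ ∀ e, ¬ Relation.TransGen M.mbStep e e := by
  constructor
  · rintro ⟨lin, hlin, hmb⟩ e he
    have key : ∀ a b, M.mbStep a b → lin a b ∧ a ≠ b := by
      intro a b hab
      rcases hab with h | h | h
      · refine ⟨hlin.hb_le _ _ (Relation.ReflTransGen.single (Or.inl h)), ?_⟩
        rintro rfl; exact hM.hb_po a (Relation.TransGen.single (Or.inl h))
      · refine ⟨hlin.hb_le _ _ (Relation.ReflTransGen.single (Or.inr h)), ?_⟩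
        rintro rfl; exact hM.hb_po a (Relation.TransGen.single (Or.inr h))
      · obtain ⟨⟨q, hsa, hsb⟩, hcase⟩ := h
        have hne : a ≠ b := by
          rintro rfl
          rcases hcase with ⟨hm, hnm⟩ | ⟨r₁, r₂, h1, h2, h12⟩
          · exact hnm hm
          · have hrr := hM.msg_functional a r₁ r₂ h1 h2
            subst hrr
            exact hM.hb_po r₁ (Relation.TransGen.mono (fun x y h => Or.inl h) _ _ h12)
        refine ⟨?_, hne⟩
        rcases hlin.total a b with h | hba
        · exact h
        · exfalso
          rcases hmb b a q hsb hsa hba with ⟨r, r', hbr, har', hrr'⟩ | hna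
          · rcases hcase with ⟨hm, hnm⟩ | ⟨r₁, r₂, h1, h2, h12⟩
            · exact hnm ⟨r, hbr⟩
            · have e1 : r' = r₁ := hM.msg_functional a _ _ har' h1
              have e2 : r = r₂ := hM.msg_functional b _ _ hbr h2
              subst e1; subst e2
              have hl1 : lin r' r :=
                hlin.hb_le _ _ ((Relation.TransGen.mono (fun x y h => Or.inl h) _ _ h12).to_reflTransGen)
              have heq := hlin.antisymm _ _ hrr' hl1
              subst heq
              exact hM.hb_po _ (Relation.TransGen.mono (fun x y h => Or.inl h) _ _ h12)
          · rcases hcase with ⟨hm, _⟩ | ⟨r₁, r₂, h1, _, _⟩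
            · exact hna hm
            · exact hna ⟨r₁, h1⟩
    have main : ∀ a b, Relation.TransGen M.mbStep a b → lin a b ∧ a ≠ b := by
      intro a b h
      induction h with
      | single h => exact key _ _ h
      | tail h hstep ih =>
        obtain ⟨l1, ne1⟩ := ih
        obtain ⟨l2, ne2⟩ := key _ _ hstep
        refine ⟨hlin.trans _ _ _ l1 l2, ?_⟩
        rintro rfl
        exact ne1 (hlin.antisymm _ _ l1 l2)
    exact (main e e he).2 rfl
  · intro hacyc
    set r : M.E → M.E → Prop := fun a b => a = b ∨ Relation.TransGen M.mbStep a b with hrdef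
    haveI hrefl : IsRefl M.E r := ⟨fun a => Or.inl rfl⟩
    haveI htrans : IsTrans M.E r := by
      constructor
      rintro a b c (rfl | hab) hbc
      · exact hbc
      · rcases hbc with rfl | hbc
        · exact Or.inr hab
        · exact Or.inr (hab.trans hbc)
    haveI hanti : IsAntisymm M.E r := by
      constructor
      rintro a b (rfl | hab) hba
      · rfl
      · rcases hba with rfl | hba
        · rfl
        · exact absurd (hab.trans hba) (hacyc a)
    haveI hpre : IsPreorder M.E r := ⟨⟩
    haveI hpo : IsPartialOrder M.E r := ⟨⟩
    obtain ⟨s, hs, hrs⟩ := extend_partialOrder r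
    haveI := hs
    have hsub : ∀ a b, Relation.TransGen M.mbStep a b → s a b :=
      fun a b h => hrs a b (Or.inr h)
    have hstrict : ∀ a b, Relation.TransGen M.mbStep a b → a ≠ b := by
      rintro a b h rfl; exact hacyc a h
    have hIsLin : M.IsLin s := by
      refine ⟨fun e => refl_of s e, fun a b c => trans_of s,
        fun a b => antisymm_of s, fun a b => total_of s a b, ?_⟩
      intro a b hab
      rcases (Relation.reflTransGen_iff_eq_or_transGen.mp hab) with rfl | h
      · exact refl_of s _
      · exact hsub _ _ (Relation.TransGen.mono (fun x y hxy => hxy.elim Or.inl (fun h' => Or.inr (Or.inl h'))) _ _ h)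
    refine ⟨s, hIsLin, ?_⟩
    intro s₁ s₂ q hq1 hq2 h12
    by_cases hm2 : M.Matched s₂
    · left
      obtain ⟨r₂, hr2⟩ := hm2
      by_cases hm1 : M.Matched s₁
      · obtain ⟨r₁, hr1⟩ := hm1
        refine ⟨r₁, r₂, hr1, hr2, ?_⟩
        by_cases h12e : s₁ = s₂
        · subst h12e
          have : r₁ = r₂ := hM.msg_functional s₁ _ _ hr1 hr2
          subst this; exact refl_of s r₁
        · -- r₁ ≠ r₂
          obtain ⟨p1, m1, hl1⟩ := id hq1
          obtain ⟨p2, m2, hl2⟩ := id hq2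
          obtain ⟨p1', q1', m1', hls1, hlr1⟩ := hM.msg_lbl _ _ hr1
          obtain ⟨p2', q2', m2', hls2, hlr2⟩ := hM.msg_lbl _ _ hr2
          have hq1' : q1' = q := by
            rw [hl1] at hls1; injection hls1 with _ e _; exact e.symm
          have hq2' : q2' = q := by
            rw [hl2] at hls2; injection hls2 with _ e _; exact e.symm
          have hex : (M.lbl r₁).exec = (M.lbl r₂).exec := by
            rw [hlr1, hlr2]; simp [Action.exec, hq1', hq2']
          have hrne : r₁ ≠ r₂ := by
            rintro rfl
            obtain ⟨e₀, -, huniq⟩ := hM.recv_matched r₁ ⟨p1', q1', m1', hlr1⟩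
            exact h12e ((huniq s₁ hr1).trans (huniq s₂ hr2).symm)
          rcases hM.proc_total r₁ r₂ hex hrne with hpt | hpt
          · exact hsub _ _ (Relation.TransGen.mono (fun x y h => Or.inl h) _ _ hpt)
          · exfalso
            have hmbs : M.mbStep s₂ s₁ :=
              Or.inr (Or.inr ⟨⟨q, hq2, hq1⟩, Or.inr ⟨r₂, r₁, hr2, hr1, hpt⟩⟩)
            have := antisymm_of s h12 (hsub _ _ (Relation.TransGen.single hmbs))
            exact h12e this
      · exfalso
        have hne : s₁ ≠ s₂ := by rintro rfl; exact hm1 ⟨r₂, hr2⟩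
        have hmbs : M.mbStep s₂ s₁ :=
          Or.inr (Or.inr ⟨⟨q, hq2, hq1⟩, Or.inl ⟨⟨r₂, hr2⟩, hm1⟩⟩)
        exact hne (antisymm_of s h12 (hsub _ _ (Relation.TransGen.single hmbs)))
    · right; exact hm2

end MSCPaper
end

section
/- An MSC M = (E, →, ◁, λ) is a 1-n MSC if and only if the relation ⪯_1n := (→ ∪ ◁ ∪ ↦_1n)* is a partial order on E (equivalently, the relation → ∪ ◁ ∪ ↦_1n is acyclic). -/
namespace MSCPaper

/-- An MSC is a 1-n MSC iff `⪯_1n := (→ ∪ ◁ ∪ ↦_1n)*` is a partial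
order, equivalently `→ ∪ ◁ ∪ ↦_1n` is acyclic. -/
theorem oneN_iff_onenStep_acyclic {P Msg : Type} (M : PreMSC P Msg) (hM : M.IsMSC) :
    M.IsOneN ↔ ∀ e, ¬ Relation.TransGen M.onenStep e e := by
  have hnext_hb : ∀ a b : M.E, Relation.TransGen M.next a b → M.hb a b := fun a b h =>
    (Relation.TransGen.mono (fun _ _ h => Or.inl h) _ _ h).to_reflTransGen
  constructor
  · rintro ⟨lin, hlin, hcond⟩ e he
    have key : ∀ a b : M.E, M.onenStep a b → lin a b ∧ a ≠ b := by
      rintro a b (h | h | h)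
      · refine ⟨hlin.hb_le _ _ (Relation.ReflTransGen.single (Or.inl h)), ?_⟩
        rintro rfl
        exact hM.hb_po a (Relation.TransGen.single (Or.inl h))
      · refine ⟨hlin.hb_le _ _ (Relation.ReflTransGen.single (Or.inr h)), ?_⟩
        rintro rfl
        exact hM.hb_po a (Relation.TransGen.single (Or.inr h))
      · rcases h with ⟨hs, hs', hexec, hma, hmb⟩ | ⟨s₁, s₂, h1, h2, hexec, hnext⟩
        · have hne : a ≠ b := by rintro rfl; exact hmb hma
          rcases hM.proc_total a b hexec hne with h | h
          · exact ⟨hlin.hb_le _ _ (hnext_hb _ _ h), hne⟩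
          · rcases hcond b a hs' hs hexec.symm h with ⟨r, r', hr, _, _⟩ | hna
            · exact absurd ⟨r, hr⟩ hmb
            · exact absurd hma hna
        · have hb_isSend : ∀ x y : M.E, M.msg x y → (M.lbl x).isSend := by
            intro x y h
            obtain ⟨p, q, m, hx, _⟩ := hM.msg_lbl x y h
            exact ⟨p, q, m, hx⟩
          rcases hcond s₁ s₂ (hb_isSend _ _ h1) (hb_isSend _ _ h2) hexec hnext with
            ⟨r, r', hr, hr', hlinrr⟩ | hna
          · have e1 : r = a := hM.msg_functional s₁ r a hr h1
            have e2 : r' = b := hM.msg_functional s₂ r' b hr' h2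
            refine ⟨e1 ▸ e2 ▸ hlinrr, ?_⟩
            intro hab
            have h2' : M.msg s₂ a := hab ▸ h2
            obtain ⟨p, q, m, _, hx⟩ := hM.msg_lbl s₁ a h1
            obtain ⟨s, _, huniq⟩ := hM.recv_matched a ⟨p, q, m, hx⟩
            have hss : s₁ = s₂ := (huniq s₁ h1).trans (huniq s₂ h2').symm
            have hcyc : Relation.TransGen M.next s₂ s₂ := hss ▸ hnext
            exact hM.hb_po s₂ (Relation.TransGen.mono (fun _ _ h => Or.inl h) _ _ hcyc)
          · exact absurd ⟨b, h2⟩ hna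
    have main : ∀ a b : M.E, Relation.TransGen M.onenStep a b → lin a b ∧ a ≠ b := by
      intro a b h
      induction h with
      | single h => exact key _ _ h
      | tail h2 h3 ih =>
        obtain ⟨l1, n1⟩ := ih
        obtain ⟨l2, n2⟩ := key _ _ h3
        refine ⟨hlin.trans _ _ _ l1 l2, ?_⟩
        rintro rfl
        exact n2 (hlin.antisymm _ _ l2 l1)
    exact (main e e he).2 rfl
  · intro hacyc
    letI : PartialOrder M.E :=
      { le := Relation.ReflTransGen M.onenStep
        le_refl := fun _ => Relation.ReflTransGen.refl
        le_trans := fun _ _ _ h1 h2 => Relation.ReflTransGen.trans h1 h2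
        le_antisymm := by
          intro a b hab hba
          rcases (Relation.reflTransGen_iff_eq_or_transGen.mp hab) with rfl | h
          · rfl
          · exact absurd (Relation.TransGen.trans_right hba h) (hacyc b) }
    refine ⟨fun a b => toLinearExtension (α := M.E) a ≤ toLinearExtension b, ?_, ?_⟩
    · refine ⟨fun e => le_refl _, fun e f g h1 h2 => le_trans h1 h2,
        fun e f h1 h2 => ?_, fun e f => le_total _ _, fun e f h => ?_⟩
      · have h3 : toLinearExtension (α := M.E) e = toLinearExtension f := le_antisymm h1 h2
        exact congrArg (fun x => x) h3
      · refine toLinearExtension.monotone ?_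
        exact Relation.ReflTransGen.mono (fun a b h => h.imp id Or.inl) _ _ h
    · intro s s' hs hs' hexec hnext
      by_cases hm' : M.Matched s'
      · obtain ⟨r', hr'⟩ := hm'
        have hm : M.Matched s := by
          by_contra hns
          have ho : M.onenRel s' s := Or.inl ⟨hs', hs, hexec.symm, ⟨r', hr'⟩, hns⟩
          have c1 : Relation.TransGen M.onenStep s s' :=
            Relation.TransGen.mono (fun _ _ h => Or.inl h) _ _ hnext
          exact hacyc s (c1.tail (Or.inr (Or.inr ho)))
        obtain ⟨r, hr⟩ := hm
        refine Or.inl ⟨r, r', hr, hr', ?_⟩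
        refine toLinearExtension.monotone ?_
        exact Relation.ReflTransGen.single
          (Or.inr (Or.inr (Or.inr ⟨s, s', hr, hr', hexec, hnext⟩)))
      · exact Or.inr hm'

end MSCPaper
end

section
/- Every n-1 (mailbox) MSC without unmatched send events is a 1-n MSC. -/
namespace MSCPaper

namespace PreMSC

variable {P Msg : Type} {M : PreMSC P Msg}

private lemma shb_irrefl (hM : M.IsMSC) : ∀ e, ¬ M.shb e e := hM.hb_po

private lemma shb_trans {a b c : M.E} (h1 : M.shb a b) (h2 : M.shb b c) : M.shb a c :=
  Relation.TransGen.trans h1 h2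

private lemma shb_ne (hM : M.IsMSC) {a b : M.E} (h : M.shb a b) : a ≠ b := by
  rintro rfl; exact hM.hb_po a h

private lemma msg_shb {s r : M.E} (h : M.msg s r) : M.shb s r :=
  Relation.TransGen.single (Or.inr h)

private lemma next_shb {a b : M.E} (h : Relation.TransGen M.next a b) : M.shb a b :=
  Relation.TransGen.mono (fun _ _ hx => Or.inl hx) _ _ h

private lemma shb_hb {a b : M.E} (h : M.shb a b) : M.hb a b :=
  Relation.TransGen.to_reflTransGen h

private lemma lin_of_shb {lin : M.E → M.E → Prop} (hlin : M.IsLin lin) {a b : M.E}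
    (h : M.shb a b) : lin a b := hlin.hb_le a b (shb_hb h)

private lemma wf_rel (hM : M.IsMSC) (r : M.E → M.E → Prop)
    (ht : ∀ a b c, r a b → r b c → r a c) (hi : ∀ a, ¬ r a a) : WellFounded r := by
  haveI : Finite M.E := hM.finite
  letI : IsTrans M.E r := ⟨fun a b c => ht a b c⟩
  letI : IsIrrefl M.E r := ⟨hi⟩
  exact Finite.wellFounded_of_trans_of_irrefl r

private lemma exec_eq_of_next_tg {a b : M.E} (hM : M.IsMSC)
    (h : Relation.TransGen M.next a b) : (M.lbl a).exec = (M.lbl b).exec := by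
  induction h with
  | single h => exact hM.next_exec _ _ h
  | tail _ h ih => exact ih.trans (hM.next_exec _ _ h)

private lemma msg_inj_recv (hM : M.IsMSC) {s s' r : M.E} (h : M.msg s r) (h' : M.msg s' r) :
    s = s' := by
  obtain ⟨p, q, m, _, hr⟩ := hM.msg_lbl s r h
  obtain ⟨e, _, hu⟩ := hM.recv_matched r ⟨p, q, m, hr⟩
  exact (hu s h).trans (hu s' h').symm

/-- Mailbox key lemma: if `t ◁ u`, `s' ◁ r'` and `u →⁺ r'` then `t` is
lin-strictly before `s'`. -/
private lemma mbOrder (hM : M.IsMSC) {lin : M.E → M.E → Prop} (hlin : M.IsLin lin)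
    (hmb : M.MailboxCond lin) {t u s' r' : M.E} (htu : M.msg t u) (hs'r' : M.msg s' r')
    (hur' : Relation.TransGen M.next u r') : lin t s' ∧ t ≠ s' := by
  have hune : u ≠ r' := shb_ne hM (next_shb hur')
  have htne : t ≠ s' := by
    rintro rfl; exact hune (hM.msg_functional t u r' htu hs'r')
  obtain ⟨p1, q1, m1, hlt, hlu⟩ := hM.msg_lbl t u htu
  obtain ⟨p2, q2, m2, hls', hlr'⟩ := hM.msg_lbl s' r' hs'r'
  have hq : q1 = q2 := by
    have := exec_eq_of_next_tg hM hur'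
    rw [hlu, hlr'] at this; exact this
  rcases hlin.total t s' with hts' | hs't
  · exact ⟨hts', htne⟩
  · exfalso
    have hsendTo_s' : (M.lbl s').sendTo q1 := ⟨p2, m2, by rw [hls', hq]⟩
    have hsendTo_t : (M.lbl t).sendTo q1 := ⟨p1, m1, hlt⟩
    rcases hmb s' t q1 hsendTo_s' hsendTo_t hs't with ⟨r₁, r₂, h1, h2, h12⟩ | hnm
    · have e1 : r₁ = r' := hM.msg_functional s' r₁ r' h1 hs'r'
      have e2 : r₂ = u := hM.msg_functional t r₂ u h2 htu
      rw [e1, e2] at h12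
      exact hune (hlin.antisymm u r' (lin_of_shb hlin (next_shb hur')) h12)
    · exact hnm ⟨u, htu⟩

private lemma exists_min_hb (hM : M.IsMSC) (W : Set M.E) {w : M.E} (hw : w ∈ W) :
    ∃ m ∈ W, M.hb m w ∧ ∀ f, M.shb f m → f ∉ W := by
  have wf : WellFounded M.shb := wf_rel hM M.shb (fun _ _ _ => shb_trans) hM.hb_po
  obtain ⟨m, hm, hmin⟩ := wf.has_min {x | x ∈ W ∧ M.hb x w}
    ⟨w, hw, Relation.ReflTransGen.refl⟩
  refine ⟨m, hm.1, hm.2, fun f hf hfW => ?_⟩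
  exact hmin f ⟨hfW, Relation.ReflTransGen.trans (shb_hb hf) hm.2⟩ hf

private lemma exists_lin_least (hM : M.IsMSC) {lin : M.E → M.E → Prop} (hlin : M.IsLin lin)
    (S : Set M.E) (hS : S.Nonempty) : ∃ m ∈ S, ∀ x ∈ S, lin m x := by
  have wf : WellFounded (fun a b => lin a b ∧ a ≠ b) := by
    refine wf_rel hM _ (fun a b c h1 h2 => ⟨hlin.trans a b c h1.1 h2.1, ?_⟩)
      (fun a h => h.2 rfl)
    rintro rfl
    exact h1.2 (hlin.antisymm a b h1.1 h2.1)
  obtain ⟨m, hm, hmin⟩ := wf.has_min S hS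
  refine ⟨m, hm, fun x hx => ?_⟩
  rcases hlin.total m x with h | h
  · exact h
  · by_cases hxm : x = m
    · subst hxm; exact h
    · exact absurd ⟨h, hxm⟩ (hmin x hx)

/-- Core progress lemma: any nonempty upward-closed set `W` of remaining events
contains a schedulable event. -/
private lemma progress (hM : M.IsMSC) {lin : M.E → M.E → Prop} (hlin : M.IsLin lin)
    (hmb : M.MailboxCond lin) (W : Set M.E) (hne : W.Nonempty)
    (hup : ∀ e f, M.hb e f → e ∈ W → f ∈ W) :
    ∃ e ∈ W, (∀ f, M.shb f e → f ∉ W) ∧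
      ∀ s s' r', M.msg s e → Relation.TransGen M.next s' s → M.msg s' r' → r' ∉ W := by
  haveI : Finite M.E := hM.finite
  by_contra hcon
  push_neg at hcon
  -- blocked elements
  have blocked : ∀ e, e ∈ W → (∀ f, M.shb f e → f ∉ W) →
      ∃ s s' r', M.msg s e ∧ Relation.TransGen M.next s' s ∧ M.msg s' r' ∧ r' ∈ W := by
    intro e he hmin
    obtain ⟨s, s', r', h1, h2, h3, h4⟩ := hcon e he hmin
    exact ⟨s, s', r', h1, h2, h3, h4⟩
  set Min : Set M.E := {e | e ∈ W ∧ ∀ f, M.shb f e → f ∉ W} with hMinDef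
  have min_of_mem : ∀ w ∈ W, ∃ m ∈ Min, M.hb m w := by
    intro w hw
    obtain ⟨m, hm, hhb, hmin⟩ := exists_min_hb hM W hw
    exact ⟨m, ⟨hm, hmin⟩, hhb⟩
  obtain ⟨w₀, hw₀⟩ := hne
  obtain ⟨m₀, hm₀, _⟩ := min_of_mem w₀ hw₀
  obtain ⟨sm0, _, _, hmsg0, _, _, _⟩ := blocked m₀ hm₀.1 hm₀.2
  set S : Set M.E := {s | ∃ m ∈ Min, M.msg s m} with hSDef
  obtain ⟨sm, hsmS, hsmle⟩ := exists_lin_least hM hlin S ⟨sm0, m₀, hm₀, hmsg0⟩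
  obtain ⟨m, hmMin, hmsg⟩ := hsmS
  obtain ⟨s₀, s₁, r₁, hms₀, hns₁, hmr₁, hr₁W⟩ := blocked m hmMin.1 hmMin.2
  have hs₀ : s₀ = sm := msg_inj_recv hM hms₀ hmsg
  rw [hs₀] at hns₁
  -- minimal earlier send of sender of sm whose receive is still in W
  set B : Set M.E := {x | Relation.TransGen M.next x sm ∧ ∃ r', M.msg x r' ∧ r' ∈ W}
    with hBDef
  have wfn : WellFounded (Relation.TransGen M.next) :=
    wf_rel hM _ (fun _ _ _ h1 h2 => h1.trans h2)
      (fun a h => hM.hb_po a (next_shb h))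
  obtain ⟨s', hs'B, hs'min⟩ := wfn.has_min B ⟨s₁, hns₁, r₁, hmr₁, hr₁W⟩
  obtain ⟨hs'sm, r', hs'r', hr'W⟩ := hs'B
  have hlins'sm : lin s' sm := lin_of_shb hlin (next_shb hs'sm)
  have hs'ne : s' ≠ sm := shb_ne hM (next_shb hs'sm)
  -- no element of W can be lin-below s'
  have lemW : ∀ x, x ∈ W → lin x s' → False := by
    intro x hxW hxs'
    obtain ⟨ms, hmsMin, hmsx⟩ := min_of_mem x hxW
    obtain ⟨ts, _, _, hts, _, _, _⟩ := blocked ms hmsMin.1 hmsMin.2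
    have h1 : lin sm ts := hsmle ts ⟨ms, hmsMin, hts⟩
    have h2 : lin ts ms := lin_of_shb hlin (msg_shb hts)
    have h3 : lin ms x := hlin.hb_le _ _ hmsx
    have h5 : lin ts sm :=
      hlin.trans _ _ _ (hlin.trans _ _ _ (hlin.trans _ _ _ h2 h3) hxs') hlins'sm
    have h6 : ts = sm := hlin.antisymm _ _ h5 h1
    have h7 : lin ms sm := hlin.trans _ _ _ (hlin.trans _ _ _ h3 hxs') hlins'sm
    have h8 : ms = sm := hlin.antisymm _ _ h7 (h6 ▸ h2)
    exact shb_ne hM (msg_shb hts) (h6.trans h8.symm)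
  -- descent along the process line of r'
  have descent : ∀ u, u ∈ W → Relation.TransGen M.next u r' → False := by
    intro u
    refine wfn.induction
      (C := fun u => u ∈ W → Relation.TransGen M.next u r' → False) u ?_
    intro u IH huW hur'
    by_cases hmin : ∀ f, M.shb f u → f ∉ W
    · obtain ⟨t, _, _, htu, _, _, _⟩ := blocked u huW hmin
      have hsmt : lin sm t := hsmle t ⟨u, ⟨huW, hmin⟩, htu⟩
      obtain ⟨hts', _⟩ := mbOrder hM hlin hmb htu hs'r' hur'
      have hteq : t = sm := hlin.antisymm _ _ (hlin.trans _ _ _ hts' hlins'sm) hsmt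
      exact hs'ne (hlin.antisymm _ _ hlins'sm (hteq ▸ hts'))
    · push_neg at hmin
      obtain ⟨f, hf, hfW⟩ := hmin
      obtain ⟨w₂, hfw₂, hw₂u⟩ := (Relation.TransGen.tail'_iff).mp hf
      have hw₂W : w₂ ∈ W := hup f w₂ hfw₂ hfW
      rcases hw₂u with hnext | hmsg2
      · exact IH w₂ (Relation.TransGen.single hnext) hw₂W
          (Relation.TransGen.head hnext hur')
      · obtain ⟨hts', _⟩ := mbOrder hM hlin hmb hmsg2 hs'r' hur'
        exact lemW w₂ hw₂W hts'
  -- finally analyse r'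
  by_cases hr'min : ∀ f, M.shb f r' → f ∉ W
  · obtain ⟨s₂, s₃, r₃, hms₂, hns₃, hmr₃, hr₃W⟩ := blocked r' hr'W hr'min
    have hs₂ : s₂ = s' := msg_inj_recv hM hms₂ hs'r'
    rw [hs₂] at hns₃
    exact hs'min s₃ ⟨hns₃.trans hs'sm, r₃, hmr₃, hr₃W⟩ hns₃
  · push_neg at hr'min
    obtain ⟨f, hf, hfW⟩ := hr'min
    obtain ⟨w, hfw, hwr'⟩ := (Relation.TransGen.tail'_iff).mp hf
    have hwW : w ∈ W := hup f w hfw hfW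
    rcases hwr' with hnext | hmsgw
    · exact descent w hwW (Relation.TransGen.single hnext)
    · have : w = s' := msg_inj_recv hM hmsgw hs'r'
      exact lemW s' (this ▸ hwW) (hlin.refl s')

private lemma buildList [DecidableEq M.E] (hM : M.IsMSC) {lin : M.E → M.E → Prop}
    (hlin : M.IsLin lin) (hmb : M.MailboxCond lin) :
    ∀ (n : ℕ) (W : Set M.E), W.ncard = n → (∀ e f, M.hb e f → e ∈ W → f ∈ W) →
    ∃ L : List M.E, (∀ e, e ∈ L ↔ e ∈ W) ∧
      (∀ a b, M.shb a b → a ∈ W → b ∈ W → L.idxOf a < L.idxOf b) ∧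
      (∀ s s' r r', Relation.TransGen M.next s s' → M.msg s r → M.msg s' r' →
        r ∈ W → r' ∈ W → L.idxOf r < L.idxOf r') := by
  haveI : Finite M.E := hM.finite
  intro n
  induction n with
  | zero =>
    intro W hW _
    have hWe : W = ∅ := (Set.ncard_eq_zero W.toFinite).mp hW
    subst hWe
    exact ⟨[], by simp, by simp, by simp⟩
  | succ n IH =>
    intro W hW hup
    have hne : W.Nonempty := Set.nonempty_of_ncard_ne_zero (by omega)
    obtain ⟨e, heW, hmin, hsched⟩ := progress hM hlin hmb W hne hup
    have hup' : ∀ a b, M.hb a b → a ∈ W \ {e} → b ∈ W \ {e} := by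
      rintro a b hab ⟨haW, hane⟩
      refine ⟨hup a b hab haW, ?_⟩
      simp only [Set.mem_singleton_iff] at hane ⊢
      rintro rfl
      rcases (Relation.reflTransGen_iff_eq_or_transGen).mp hab with heq | htg
      · exact hane heq.symm
      · exact hmin a htg haW
    have hW' : (W \ {e}).ncard = n := by
      rw [Set.ncard_diff_singleton_of_mem heW]; omega
    obtain ⟨L', hmem', ha', hb'⟩ := IH (W \ {e}) hW' hup'
    have heL' : e ∉ L' := fun hc => ((hmem' e).mp hc).2 rfl
    refine ⟨e :: L', ?_, ?_, ?_⟩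
    · intro x
      simp only [List.mem_cons, hmem' x, Set.mem_diff, Set.mem_singleton_iff]
      constructor
      · rintro (rfl | ⟨hx, _⟩)
        · exact heW
        · exact hx
      · intro hx
        by_cases hxe : x = e
        · exact Or.inl hxe
        · exact Or.inr ⟨hx, hxe⟩
    · intro a b hab haW hbW
      by_cases hae : a = e
      · by_cases hbe : b = e
        · exact absurd hab (by rw [hae, hbe]; exact hM.hb_po e)
        · rw [hae, List.idxOf_cons_self, List.idxOf_cons_ne L' (fun h => hbe h.symm)]
          omega
      · by_cases hbe : b = e
        · exact absurd haW (hmin a (hbe ▸ hab))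
        · rw [List.idxOf_cons_ne L' (fun h => hae h.symm),
            List.idxOf_cons_ne L' (fun h => hbe h.symm)]
          exact Nat.succ_lt_succ (ha' a b hab ⟨haW, hae⟩ ⟨hbW, hbe⟩)
    · intro s s' r r' hss' hmsr hms'r' hrW hr'W
      by_cases hre : r = e
      · by_cases hr'e : r' = e
        · have hss : s = s' := msg_inj_recv hM (hre ▸ hmsr) (hr'e ▸ hms'r')
          exact absurd hss' (by rw [hss]; exact fun h => hM.hb_po s' (next_shb h))
        · rw [hre, List.idxOf_cons_self, List.idxOf_cons_ne L' (fun h => hr'e h.symm)]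
          omega
      · by_cases hr'e : r' = e
        · exact absurd hrW (hsched s' s r (hr'e ▸ hms'r') hss' hmsr)
        · rw [List.idxOf_cons_ne L' (fun h => hre h.symm),
            List.idxOf_cons_ne L' (fun h => hr'e h.symm)]
          exact Nat.succ_lt_succ (hb' s s' r r' hss' hmsr hms'r' ⟨hrW, hre⟩ ⟨hr'W, hr'e⟩)

end PreMSC

/-- Every n-1 (mailbox) MSC without unmatched send events is a
1-n MSC. -/
theorem isOneN_of_isMailbox_noUnmatched {P Msg : Type} (M : PreMSC P Msg)
    (hM : M.IsMSC) (hunm : ∀ e, (M.lbl e).isSend → M.Matched e)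
    (h : M.IsMailbox) : M.IsOneN := by
  classical
  obtain ⟨lin, hlin, hmb⟩ := h
  haveI : Finite M.E := hM.finite
  obtain ⟨L, hmem, ha, hb⟩ := PreMSC.buildList hM hlin hmb (Set.univ.ncard) Set.univ rfl
    (fun _ _ _ _ => trivial)
  have hmemL : ∀ x : M.E, x ∈ L := fun x => (hmem x).mpr trivial
  refine ⟨fun a b => L.idxOf a ≤ L.idxOf b, ⟨?_, ?_, ?_, ?_, ?_⟩, ?_⟩
  · intro e; exact le_refl _
  · intro e f g h1 h2; exact le_trans h1 h2
  · intro e f h1 h2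
    exact (List.idxOf_inj (hmemL e)).mp (le_antisymm h1 h2)
  · intro e f; exact le_total _ _
  · intro e f hef
    rcases (Relation.reflTransGen_iff_eq_or_transGen).mp hef with heq | htg
    · rw [heq]
    · exact le_of_lt (ha e f htg trivial trivial)
  · intro s s' hs _ _ hnext
    by_cases hm : M.Matched s'
    · obtain ⟨r', hr'⟩ := hm
      obtain ⟨r, hr⟩ := hunm s hs
      exact Or.inl ⟨r, r', hr, hr', le_of_lt (hb s s' r r' hnext hr hr' trivial trivial)⟩
    · exact Or.inr hm


end MSCPaper
end

section
/- Every 1-n MSC is an n-1 (mailbox) MSC. -/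
namespace MSCPaper

namespace PreMSC

variable {P Msg : Type} {M : PreMSC P Msg}

private lemma step_mbStep {a b : M.E} (h : M.step a b) : M.mbStep a b :=
  h.elim Or.inl (fun h => Or.inr (Or.inl h))

private lemma nextTG_step {a b : M.E} (h : Relation.TransGen M.next a b) :
    Relation.TransGen M.step a b := Relation.TransGen.mono (fun _ _ h => Or.inl h) _ _ h

private lemma nextTG_hb {a b : M.E} (h : Relation.TransGen M.next a b) : M.hb a b :=
  (nextTG_step h).to_reflTransGen

private lemma exec_eq_of_nextTG (hM : M.IsMSC) {a b : M.E}
    (h : Relation.TransGen M.next a b) : (M.lbl a).exec = (M.lbl b).exec := by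
  induction h with
  | single h => exact hM.next_exec _ _ h
  | tail _ h ih => exact ih.trans (hM.next_exec _ _ h)

private lemma isSend_of_msg (hM : M.IsMSC) {a b : M.E} (h : M.msg a b) :
    (M.lbl a).isSend := by
  obtain ⟨p, q, m, h1, _⟩ := hM.msg_lbl _ _ h
  exact ⟨p, q, m, h1⟩

private lemma isRecv_of_msg (hM : M.IsMSC) {a b : M.E} (h : M.msg a b) :
    (M.lbl b).isRecv := by
  obtain ⟨p, q, m, _, h2⟩ := hM.msg_lbl _ _ h
  exact ⟨p, q, m, h2⟩

/-- No event is simultaneously a send and a receive. -/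
private lemma not_isSend_isRecv {a : M.E} (hs : (M.lbl a).isSend)
    (hr : (M.lbl a).isRecv) : False := by
  obtain ⟨p, q, m, h1⟩ := hs
  obtain ⟨p', q', m', h2⟩ := hr
  rw [h1] at h2
  cases h2

/-- In a 1-n MSC, sends following an unmatched send on the same process
are unmatched. -/
private lemma unmatched_of_unmatched (hM : M.IsMSC) {lin0 : M.E → M.E → Prop}
    (h1n : M.OneNCond lin0) {u e : M.E}
    (hu : (M.lbl u).isSend) (hun : ¬ M.Matched u) (he : (M.lbl e).isSend)
    (hne : Relation.TransGen M.next u e) : ¬ M.Matched e := by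
  rcases h1n u e hu he (exec_eq_of_nextTG hM hne) hne with ⟨r, r', hr, _, _⟩ | h
  · exact absurd ⟨r, hr⟩ hun
  · exact h

/-- `e` is an unmatched send or a process-successor of one. -/
def Tainted (M : PreMSC P Msg) (e : M.E) : Prop :=
  ∃ u, (M.lbl u).isSend ∧ ¬ M.Matched u ∧ (u = e ∨ Relation.TransGen M.next u e)

private lemma not_matched_tainted (hM : M.IsMSC) {lin0 : M.E → M.E → Prop}
    (h1n : M.OneNCond lin0) {e : M.E}
    (ht : M.Tainted e) (hs : (M.lbl e).isSend) (hm : M.Matched e) : False := by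
  obtain ⟨u, hu, hun, hcase⟩ := ht
  rcases hcase with rfl | hne
  · exact hun hm
  · exact unmatched_of_unmatched hM h1n hu hun hs hne hm

private lemma tainted_step (hM : M.IsMSC) {lin0 : M.E → M.E → Prop}
    (h1n : M.OneNCond lin0) {e f : M.E} (ht : M.Tainted e) (h : M.mbStep e f) :
    M.next e f := by
  rcases h with h | h | h
  · exact h
  · exact (not_matched_tainted hM h1n ht (isSend_of_msg hM h) ⟨f, h⟩).elim
  · obtain ⟨⟨q, ⟨p, m, hl⟩, _⟩, hor⟩ := h
    have hm : M.Matched e := by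
      rcases hor with ⟨hm, _⟩ | ⟨r₁, r₂, h₁, _, _⟩
      · exact hm
      · exact ⟨r₁, h₁⟩
    exact (not_matched_tainted hM h1n ht ⟨p, q, m, hl⟩ hm).elim

private lemma tainted_of_nextTG {e f : M.E} (ht : M.Tainted e)
    (h : Relation.TransGen M.next e f) : M.Tainted f := by
  obtain ⟨u, hu, hun, hc⟩ := ht
  refine ⟨u, hu, hun, Or.inr ?_⟩
  rcases hc with rfl | h'
  · exact h
  · exact h'.trans h

private lemma tainted_chain (hM : M.IsMSC) {lin0 : M.E → M.E → Prop}
    (h1n : M.OneNCond lin0) {e f : M.E} (ht : M.Tainted e)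
    (h : Relation.TransGen M.mbStep e f) : Relation.TransGen M.next e f := by
  induction h with
  | single h => exact .single (tainted_step hM h1n ht h)
  | tail _ h ih => exact ih.tail (tainted_step hM h1n (tainted_of_nextTG ht ih) h)

/-- The "history set" of `e`: `e` itself together with the receives of all
matched sends at or before `e` on `e`'s process. -/
def Hmem (M : PreMSC P Msg) (e x : M.E) : Prop :=
  x = e ∨ ∃ t, M.msg t x ∧ (t = e ∨ Relation.TransGen M.next t e)

def HLe (M : PreMSC P Msg) (lin0 : M.E → M.E → Prop) (a b : M.E) : Prop :=
  ∀ x, M.Hmem a x → ∃ y, M.Hmem b y ∧ lin0 x y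

def HLt (M : PreMSC P Msg) (lin0 : M.E → M.E → Prop) (a b : M.E) : Prop :=
  ∃ y, M.Hmem b y ∧ ∀ x, M.Hmem a x → lin0 x y ∧ x ≠ y

section Pot

variable {lin0 : M.E → M.E → Prop} (hl0 : M.IsLin lin0)

include hl0

private lemma hle_trans {a b c : M.E} (h : M.HLe lin0 a b) (h' : M.HLe lin0 b c) :
    M.HLe lin0 a c := by
  intro x hx
  obtain ⟨y, hy, hxy⟩ := h x hx
  obtain ⟨z, hz, hyz⟩ := h' y hy
  exact ⟨z, hz, hl0.trans _ _ _ hxy hyz⟩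

set_option linter.unusedSectionVars false in
private lemma hle_of_hlt {a b : M.E} (h : M.HLt lin0 a b) : M.HLe lin0 a b := by
  obtain ⟨y, hy, spec⟩ := h
  exact fun x hx => ⟨y, hy, (spec x hx).1⟩

private lemma hle_hlt {a b c : M.E} (h : M.HLe lin0 a b) (h' : M.HLt lin0 b c) :
    M.HLt lin0 a c := by
  obtain ⟨y, hy, spec⟩ := h'
  refine ⟨y, hy, fun x hx => ?_⟩
  obtain ⟨x', hx', hxx'⟩ := h x hx
  refine ⟨hl0.trans _ _ _ hxx' (spec x' hx').1, fun heq => ?_⟩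
  subst heq
  exact (spec x' hx').2 (hl0.antisymm _ _ (spec x' hx').1 hxx')

private lemma hlt_hle {a b c : M.E} (h : M.HLt lin0 a b) (h' : M.HLe lin0 b c) :
    M.HLt lin0 a c := by
  obtain ⟨y, hy, spec⟩ := h
  obtain ⟨z, hz, hyz⟩ := h' y hy
  refine ⟨z, hz, fun x hx => ?_⟩
  refine ⟨hl0.trans _ _ _ (spec x hx).1 hyz, fun heq => ?_⟩
  subst heq
  exact (spec x hx).2 (hl0.antisymm _ _ (spec x hx).1 hyz)

private lemma step_hle (hM : M.IsMSC) (h1n : M.OneNCond lin0) {a b : M.E}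
    (h : M.step a b) : M.HLe lin0 a b := by
  intro x hx
  rcases hx with rfl | ⟨t, hmsg, ht⟩
  · exact ⟨b, Or.inl rfl, hl0.hb_le _ _ (Relation.ReflTransGen.single h)⟩
  · rcases h with h | h
    · -- next a b : the send t is also before b
      refine ⟨x, Or.inr ⟨t, hmsg, Or.inr ?_⟩, hl0.refl x⟩
      rcases ht with rfl | ht
      · exact .single h
      · exact ht.tail h
    · -- msg a b : use 1-n condition
      rcases ht with rfl | ht
      · exact ⟨x, Or.inl (hM.msg_functional _ _ _ hmsg h), hl0.refl x⟩
      · rcases h1n t a (isSend_of_msg hM hmsg) (isSend_of_msg hM h)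
          (exec_eq_of_nextTG hM ht) ht with ⟨r, r', hr, hr', hrr'⟩ | hnm
        · have hx : x = r := hM.msg_functional _ _ _ hmsg hr
          have hb : r' = b := hM.msg_functional _ _ _ hr' h
          exact ⟨r', Or.inl hb, show lin0 x r' by rw [hx]; exact hrr'⟩
        · exact (hnm ⟨b, h⟩).elim

private lemma stepTG_hle (hM : M.IsMSC) (h1n : M.OneNCond lin0) {a b : M.E}
    (h : Relation.TransGen M.step a b) : M.HLe lin0 a b := by
  induction h with
  | single h => exact step_hle hl0 hM h1n h
  | tail _ h ih => exact hle_trans hl0 ih (step_hle hl0 hM h1n h)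

private lemma B_hlt (hM : M.IsMSC) (h1n : M.OneNCond lin0) {a b r₁ r₂ : M.E}
    (h₁ : M.msg a r₁) (h₂ : M.msg b r₂) (h₃ : Relation.TransGen M.next r₁ r₂) :
    M.HLt lin0 a b := by
  have hr12 : r₁ ≠ r₂ := by
    rintro rfl
    exact hM.hb_po r₁ (nextTG_step h₃)
  have hlr12 : lin0 r₁ r₂ := hl0.hb_le _ _ (nextTG_hb h₃)
  refine ⟨r₂, Or.inr ⟨b, h₂, Or.inl rfl⟩, fun x hx => ?_⟩
  rcases hx with rfl | ⟨t, hmsg, ht⟩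
  · refine ⟨hl0.trans _ _ _ (hl0.hb_le _ _ (Relation.ReflTransGen.single (Or.inr h₁))) hlr12,
      fun heq => ?_⟩
    exact not_isSend_isRecv (heq ▸ isSend_of_msg hM h₁) (isRecv_of_msg hM h₂)
  · rcases ht with rfl | ht
    · have : x = r₁ := hM.msg_functional _ _ _ hmsg h₁
      subst this
      exact ⟨hlr12, hr12⟩
    · rcases h1n t a (isSend_of_msg hM hmsg) (isSend_of_msg hM h₁)
        (exec_eq_of_nextTG hM ht) ht with ⟨r, r', hr, hr', hrr'⟩ | hnm
      · have hx : x = r := hM.msg_functional _ _ _ hmsg hr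
        have hb : r' = r₁ := hM.msg_functional _ _ _ hr' h₁
        subst hx; subst hb
        refine ⟨hl0.trans _ _ _ hrr' hlr12, fun heq => ?_⟩
        subst heq
        exact hr12 (hl0.antisymm _ _ hlr12 hrr')
      · exact (hnm ⟨r₁, h₁⟩).elim

private lemma class_mbStep (hM : M.IsMSC) (h1n : M.OneNCond lin0) {a b : M.E}
    (h : M.mbStep a b) :
    Relation.TransGen M.step a b ∨ M.HLt lin0 a b ∨ M.Tainted b := by
  rcases h with h | h | h
  · exact Or.inl (.single (Or.inl h))
  · exact Or.inl (.single (Or.inr h))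
  · obtain ⟨⟨q, hsa, ⟨p, m, hlb⟩⟩, hor⟩ := h
    rcases hor with ⟨_, hnm⟩ | ⟨r₁, r₂, h₁, h₂, h₃⟩
    · exact Or.inr (Or.inr ⟨b, ⟨p, q, m, hlb⟩, hnm, Or.inl rfl⟩)
    · exact Or.inr (Or.inl (B_hlt hl0 hM h1n h₁ h₂ h₃))

private lemma main_mbStep (hM : M.IsMSC) (h1n : M.OneNCond lin0) {a b : M.E}
    (h : Relation.TransGen M.mbStep a b) :
    Relation.TransGen M.step a b ∨ M.HLt lin0 a b ∨
      ∃ t, M.Tainted t ∧ Relation.ReflTransGen M.mbStep a t ∧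
        Relation.ReflTransGen M.mbStep t b := by
  induction h with
  | @single b2 h =>
    rcases class_mbStep hl0 hM h1n h with h' | h' | h'
    · exact Or.inl h'
    · exact Or.inr (Or.inl h')
    · exact Or.inr (Or.inr ⟨b2, h', Relation.ReflTransGen.single h, .refl⟩)
  | @tail b2 c2 hab hbc ih =>
    rcases class_mbStep hl0 hM h1n hbc with h' | h' | h'
    · rcases ih with ih | ih | ⟨t, ht, h1, h2⟩
      · exact Or.inl (ih.trans h')
      · exact Or.inr (Or.inl (hlt_hle hl0 ih (stepTG_hle hl0 hM h1n h')))
      · exact Or.inr (Or.inr ⟨t, ht, h1, h2.tail hbc⟩)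
    · rcases ih with ih | ih | ⟨t, ht, h1, h2⟩
      · exact Or.inr (Or.inl (hle_hlt hl0 (stepTG_hle hl0 hM h1n ih) h'))
      · exact Or.inr (Or.inl (hlt_hle hl0 ih (hle_of_hlt hl0 h')))
      · exact Or.inr (Or.inr ⟨t, ht, h1, h2.tail hbc⟩)
    · exact Or.inr (Or.inr ⟨c2, h', (hab.tail hbc).to_reflTransGen, .refl⟩)

end Pot

private lemma mbStep_acyclic (hM : M.IsMSC) {lin0 : M.E → M.E → Prop}
    (hl0 : M.IsLin lin0) (h1n : M.OneNCond lin0) (e : M.E) :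
    ¬ Relation.TransGen M.mbStep e e := by
  intro he
  rcases main_mbStep hl0 hM h1n he with h | h | ⟨t, ht, h1, h2⟩
  · exact hM.hb_po e h
  · obtain ⟨y, hy, spec⟩ := h
    exact (spec y hy).2 rfl
  · have htt : Relation.TransGen M.mbStep t t :=
      Relation.TransGen.trans_right h2 (Relation.TransGen.trans_left he h1)
    exact hM.hb_po t (nextTG_step (tainted_chain hM h1n ht htt))

end PreMSC

/-- Every 1-n MSC is an n-1 (mailbox) MSC. -/
theorem isMailbox_of_isOneN {P Msg : Type} (M : PreMSC P Msg) (hM : M.IsMSC)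
    (h : M.IsOneN) : M.IsMailbox := by
  classical
  obtain ⟨lin0, hl0, h1n⟩ := h
  have hacyc := PreMSC.mbStep_acyclic hM hl0 h1n
  -- the reflexive-transitive closure of mbStep is a partial order
  haveI hpo : IsPartialOrder M.E (Relation.ReflTransGen M.mbStep) :=
    { refl := fun _ => .refl
      trans := fun _ _ _ h1 h2 => h1.trans h2
      antisymm := by
        intro a b hab hba
        by_contra hne
        have h1 : Relation.TransGen M.mbStep a b :=
          (Relation.reflTransGen_iff_eq_or_transGen.mp hab).resolve_left
            (fun h => hne h.symm)
        have h2 : Relation.TransGen M.mbStep b a :=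
          (Relation.reflTransGen_iff_eq_or_transGen.mp hba).resolve_left
            (fun h => hne h)
        exact hacyc a (h1.trans h2) }
  obtain ⟨s, hs, hsub⟩ := extend_partialOrder (Relation.ReflTransGen M.mbStep)
  haveI := hs
  have hmb : ∀ {a b : M.E}, M.mbRel a b → s a b := fun h =>
    hsub _ _ (Relation.ReflTransGen.single (Or.inr (Or.inr h)))
  have hhb : ∀ {a b : M.E}, M.hb a b → s a b := fun h =>
    hsub _ _ (Relation.ReflTransGen.mono (fun _ _ => PreMSC.step_mbStep) _ _ h)
  refine ⟨s, ⟨fun e => refl e, fun a b c => _root_.trans,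
    fun a b => antisymm, fun a b => total_of s a b, fun a b h => hhb h⟩, ?_⟩
  -- the mailbox condition
  intro x x' q hx hx' hxx'
  by_cases hm' : M.Matched x'
  · left
    obtain ⟨r₂, h₂⟩ := hm'
    by_cases hmx : M.Matched x
    · obtain ⟨r₁, h₁⟩ := hmx
      refine ⟨r₁, r₂, h₁, h₂, ?_⟩
      -- both receives are on process q
      obtain ⟨p, m, hlx⟩ := hx
      obtain ⟨p₁, q₁, m₁, hsx, hrx⟩ := hM.msg_lbl _ _ h₁
      rw [hlx] at hsx
      obtain ⟨rfl, rfl, rfl⟩ : p = p₁ ∧ q = q₁ ∧ m = m₁ := by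
        injection hsx with e1 e2 e3; exact ⟨e1, e2, e3⟩
      obtain ⟨p', m', hlx'⟩ := hx'
      obtain ⟨p₂, q₂, m₂, hsx', hrx'⟩ := hM.msg_lbl _ _ h₂
      rw [hlx'] at hsx'
      obtain ⟨rfl, rfl, rfl⟩ : p' = p₂ ∧ q = q₂ ∧ m' = m₂ := by
        injection hsx' with e1 e2 e3; exact ⟨e1, e2, e3⟩
      by_cases hr : r₁ = r₂
      · subst hr; exact refl r₁
      · have hexec : (M.lbl r₁).exec = (M.lbl r₂).exec := by
          rw [hrx, hrx']; rfl
        rcases hM.proc_total r₁ r₂ hexec hr with htg | htg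
        · exact hhb (PreMSC.nextTG_hb htg)
        · -- would give mbRel x' x, contradicting antisymmetry
          have hrel : M.mbRel x' x :=
            ⟨⟨q, ⟨p', m', hlx'⟩, ⟨p, m, hlx⟩⟩, Or.inr ⟨r₂, r₁, h₂, h₁, htg⟩⟩
          have : x' = x := antisymm (hmb hrel) hxx'
          subst this
          exact absurd (hM.msg_functional _ _ _ h₁ h₂) hr
    · -- x unmatched but x' matched : contradiction with mbRel x' x
      obtain ⟨p, m, hlx⟩ := hx
      obtain ⟨p', m', hlx'⟩ := hx'
      have hrel : M.mbRel x' x :=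
        ⟨⟨q, ⟨p', m', hlx'⟩, ⟨p, m, hlx⟩⟩, Or.inl ⟨⟨r₂, h₂⟩, hmx⟩⟩
      have : x' = x := antisymm (hmb hrel) hxx'
      subst this
      exact absurd ⟨r₂, h₂⟩ hmx
  · exact Or.inr hm'

end MSCPaper
end

section
/- Let k ≥ 1. An MSC M is existentially k-bounded if and only if the relation ≤ ∪ R_k is acyclic and, for each pair of processes (p,q), there are at most k unmatched send events whose action is a send from p to q. -/
namespace MSCPaper

section Aux

open Relation

/-- A minimum element of a nonempty finset totally preordered by `lt`. -/
private lemma finset_min {E : Type} (lt : E → E → Prop)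
    (htr : ∀ a b c, lt a b → lt b c → lt a c) :
    ∀ s : Finset E, s.Nonempty →
      (∀ a ∈ s, ∀ b ∈ s, a ≠ b → lt a b ∨ lt b a) →
      ∃ m ∈ s, ∀ x ∈ s, x = m ∨ lt m x := by
  classical
  intro s
  induction s using Finset.induction_on with
  | empty => intro h; exact absurd h (by simp)
  | @insert a s ha ih =>
    intro _ htot
    rcases s.eq_empty_or_nonempty with rfl | hne
    · exact ⟨a, by simp, by simp⟩
    · obtain ⟨m, hm, hmin⟩ := ih hne (fun x hx y hy => htot x (by simp [hx]) y (by simp [hy]))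
      have ham : a ≠ m := fun h => ha (h ▸ hm)
      rcases htot a (by simp) m (by simp [hm]) ham with h | h
      · refine ⟨a, by simp, ?_⟩
        intro x hx
        rcases Finset.mem_insert.mp hx with rfl | hx
        · exact Or.inl rfl
        · rcases hmin x hx with rfl | hx'
          · exact Or.inr h
          · exact Or.inr (htr _ _ _ h hx')
      · refine ⟨m, by simp [hm], ?_⟩
        intro x hx
        rcases Finset.mem_insert.mp hx with rfl | hx
        · exact Or.inr h
        · exact hmin x hx

private lemma exists_min_of_finite {E : Type} (lt : E → E → Prop)
    (htr : ∀ a b c, lt a b → lt b c → lt a c)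
    {S : Set E} (hS : S.Finite) (hne : S.Nonempty)
    (htot : ∀ a ∈ S, ∀ b ∈ S, a ≠ b → lt a b ∨ lt b a) :
    ∃ m ∈ S, ∀ x ∈ S, x = m ∨ lt m x := by
  obtain ⟨m, hm, h⟩ := finset_min lt htr hS.toFinset
    (by rwa [Set.Finite.toFinset_nonempty])
    (fun a ha b hb => htot a (hS.mem_toFinset.mp ha) b (hS.mem_toFinset.mp hb))
  exact ⟨m, hS.mem_toFinset.mp hm, fun x hx => h x (hS.mem_toFinset.mpr hx)⟩

/-- Extract a `lt`-chain of length `n` from a finite totally ordered set of size `≥ n`. -/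
private lemma exists_chain_list {E : Type} (lt : E → E → Prop)
    (htr : ∀ a b c, lt a b → lt b c → lt a c) :
    ∀ (n : ℕ) (S : Set E), S.Finite →
      (∀ a ∈ S, ∀ b ∈ S, a ≠ b → lt a b ∨ lt b a) →
      n ≤ S.ncard →
      ∃ l : List E, l.length = n ∧ (∀ x ∈ l, x ∈ S) ∧ l.Chain' lt := by
  intro n
  induction n with
  | zero => exact fun S _ _ _ => ⟨[], rfl, by simp, List.isChain_nil⟩
  | succ n ih =>
    intro S hS htot hn
    have hne : S.Nonempty := by
      rw [Set.nonempty_iff_ne_empty]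
      rintro rfl
      simp [Set.ncard_empty] at hn
    obtain ⟨m, hm, hmin⟩ := exists_min_of_finite lt htr hS hne htot
    have hcard : (S \ {m}).ncard = S.ncard - 1 := Set.ncard_diff_singleton_of_mem hm
    obtain ⟨l, hl, hlS, hchain⟩ := ih (S \ {m}) hS.diff
      (fun a ha b hb hab => htot a ha.1 b hb.1 hab) (by omega)
    refine ⟨m :: l, by simp [hl], ?_, ?_⟩
    · intro x hx
      rcases List.mem_cons.mp hx with rfl | hx
      · exact hm
      · exact (hlS x hx).1
    · show List.IsChain lt (m :: l)
      rw [List.isChain_cons]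
      refine ⟨?_, hchain⟩
      intro y hy
      have hyl : y ∈ l := List.mem_of_mem_head? hy
      have hyS := hlS y hyl
      rcases hmin y hyS.1 with rfl | h
      · exact absurd rfl hyS.2
      · exact h

/-- Transitivity along a chain indexed by `Fin (k+1)`. -/
private lemma chain_le {E : Type} (nxt : E → E → Prop) {k : ℕ} (σ : Fin (k + 1) → E)
    (h : ∀ i : Fin k, Relation.TransGen nxt (σ i.castSucc) (σ i.succ)) :
    ∀ i j : Fin (k + 1), i < j → Relation.TransGen nxt (σ i) (σ j) := by
  intro i j
  induction j using Fin.induction with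
  | zero => intro hij; exact absurd hij (by simp [Fin.lt_def])
  | succ j ihj =>
    intro hij
    have h1 : i.val ≤ j.val := by
      have := hij
      simp [Fin.lt_def] at this
      omega
    rcases eq_or_lt_of_le h1 with heq | hlt
    · have : i = j.castSucc := by
        apply Fin.ext; simpa using heq
      rw [this]
      exact h j
    · exact (ihj (by simpa [Fin.lt_def] using hlt)).trans (h j)

end Aux

namespace PreMSC

variable {P Msg : Type} {M : PreMSC P Msg}

private lemma channel_card (hM : M.IsMSC) {lin : M.E → M.E → Prop} (hlin : M.IsLin lin)
    (e : M.E) (p q : P) :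
    {f | lin f e ∧ (M.lbl f).isSendFromTo p q}.ncard =
      {f | lin f e ∧ (M.lbl f).isRecvFromTo p q}.ncard +
      {a | lin a e ∧ (M.lbl a).isSendFromTo p q ∧ ¬ ∃ f, M.msg a f ∧ lin f e}.ncard := by
  classical
  haveI := hM.finite
  set B := {f | lin f e ∧ (M.lbl f).isRecvFromTo p q} with hB
  set Good := {a | lin a e ∧ (M.lbl a).isSendFromTo p q ∧ ∃ f, M.msg a f ∧ lin f e} with hGood
  set Bad := {a | lin a e ∧ (M.lbl a).isSendFromTo p q ∧ ¬ ∃ f, M.msg a f ∧ lin f e} with hBad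
  -- the matching send of a receive
  set g : M.E → M.E := fun f => if h : ∃ a, M.msg a f then h.choose else f with hg
  -- the matching receive of a send
  set ρ : M.E → M.E := fun a => if h : ∃ f, M.msg a f then h.choose else a with hρ
  have hgmsg : ∀ f, (∃ a, M.msg a f) → M.msg (g f) f := by
    intro f h
    simp only [hg, dif_pos h]
    exact h.choose_spec
  have hρmsg : ∀ a, M.Matched a → M.msg a (ρ a) := by
    intro a h
    have h' : ∃ f, M.msg a f := h
    simp only [hρ, dif_pos h']
    exact h'.choose_spec
  have hBG : B.ncard ≤ Good.ncard := by
    apply Set.ncard_le_ncard_of_injOn g _ _ (Set.toFinite _)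
    · rintro f ⟨hfe, hrecv⟩
      obtain ⟨m, hm⟩ := hrecv
      have hmsgf : M.msg (g f) f := hgmsg f (by
        obtain ⟨a, ha, -⟩ := hM.recv_matched f ⟨p, q, m, hm⟩
        exact ⟨a, ha⟩)
      obtain ⟨p', q', m', hs', hr'⟩ := hM.msg_lbl _ _ hmsgf
      rw [hm] at hr'
      obtain ⟨rfl, rfl, rfl⟩ : p' = p ∧ q' = q ∧ m' = m := by
        simpa [Action.recv.injEq] using hr'.symm
      exact ⟨hlin.trans _ _ _ (hlin.hb_le _ _ (Relation.ReflTransGen.single (Or.inr hmsgf))) hfe,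
        ⟨_, hs'⟩, f, hmsgf, hfe⟩
    · rintro f ⟨hfe, hrf⟩ f' ⟨hfe', hrf'⟩ hgf
      obtain ⟨mf, hmf⟩ := hrf
      obtain ⟨mf', hmf'⟩ := hrf'
      have h1 : M.msg (g f) f := hgmsg f (by
        obtain ⟨a, ha, -⟩ := hM.recv_matched f ⟨p, q, mf, hmf⟩
        exact ⟨a, ha⟩)
      have h2 : M.msg (g f') f' := hgmsg f' (by
        obtain ⟨a, ha, -⟩ := hM.recv_matched f' ⟨p, q, mf', hmf'⟩
        exact ⟨a, ha⟩)
      rw [hgf] at h1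
      exact hM.msg_functional _ _ _ h1 h2
  have hGB : Good.ncard ≤ B.ncard := by
    apply Set.ncard_le_ncard_of_injOn ρ _ _ (Set.toFinite _)
    · rintro a ⟨hae, hsa, f, hmsg, hfe⟩
      obtain ⟨m, hm⟩ := hsa
      have hmsgρ : M.msg a (ρ a) := hρmsg a ⟨f, hmsg⟩
      have hρf : ρ a = f := hM.msg_functional _ _ _ hmsgρ hmsg
      obtain ⟨p', q', m', hs', hr'⟩ := hM.msg_lbl _ _ hmsgρ
      rw [hm] at hs'
      obtain ⟨rfl, rfl, rfl⟩ : p' = p ∧ q' = q ∧ m' = m := by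
        simpa [Action.send.injEq] using hs'.symm
      exact ⟨hρf ▸ hfe, _, hr'⟩
    · rintro a ⟨hae, hsa, f, hmsg, hfe⟩ a' ⟨hae', hsa', f', hmsg', hfe'⟩ hρa
      have h1 : M.msg a (ρ a) := hρmsg a ⟨f, hmsg⟩
      have h2 : M.msg a' (ρ a) := hρa ▸ hρmsg a' ⟨f', hmsg'⟩
      obtain ⟨p', q', m'', -, hr'⟩ := hM.msg_lbl _ _ h1
      obtain ⟨b, -, huniq⟩ := hM.recv_matched (ρ a) ⟨p', q', m'', hr'⟩
      rw [huniq a h1, huniq a' h2]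
  have hsplit : {f | lin f e ∧ (M.lbl f).isSendFromTo p q} = Good ∪ Bad := by
    ext a
    simp only [hGood, hBad, Set.mem_setOf_eq, Set.mem_union]
    constructor
    · rintro ⟨h1, h2⟩
      by_cases h : ∃ f, M.msg a f ∧ lin f e
      · exact Or.inl ⟨h1, h2, h⟩
      · exact Or.inr ⟨h1, h2, h⟩
    · rintro (⟨h1, h2, -⟩ | ⟨h1, h2, -⟩) <;> exact ⟨h1, h2⟩
  have hdisj : Disjoint Good Bad := by
    rw [Set.disjoint_left]
    rintro a ⟨-, -, h⟩ ⟨-, -, h'⟩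
    exact h' h
  rw [hsplit, Set.ncard_union_eq hdisj (Set.toFinite _) (Set.toFinite _)]
  omega

end PreMSC

namespace PreMSC

variable {P Msg : Type} {M : PreMSC P Msg}

private lemma next_trans_irrefl (hM : M.IsMSC) (a : M.E) :
    ¬ Relation.TransGen M.next a a :=
  fun h => hM.hb_po a (Relation.TransGen.mono (fun _ _ h => Or.inl h) _ _ h)

private lemma rk_lin_forward (hM : M.IsMSC) {k : ℕ} {lin : M.E → M.E → Prop}
    (hlin : M.IsLin lin) (hkb : M.KBounded k lin) {r s : M.E} (hrs : M.RkRel k r s) :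
    lin r s ∧ r ≠ s := by
  classical
  haveI := hM.finite
  obtain ⟨p, q, σ, hlast, hchain, hsend, hmat, ⟨i₀, hi₀⟩, hmin⟩ := hrs
  obtain ⟨ms, hms⟩ := hsend (Fin.last k)
  rw [hlast] at hms
  obtain ⟨p', q', m', hs', hr'⟩ := hM.msg_lbl _ _ hi₀
  have hne : r ≠ s := by
    intro h
    rw [h, hms] at hr'
    simp at hr'
  refine ⟨?_, hne⟩
  by_contra hnot
  have hσs : ∀ i, lin (σ i) s := by
    intro i
    rcases eq_or_lt_of_le (Fin.le_last i) with h | h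
    · rw [← hlast, h]
      exact hlin.refl _
    · rw [← hlast]
      exact hlin.hb_le _ _ (Relation.TransGen.mono (fun _ _ h => Or.inl h) _ _
        (chain_le M.next σ hchain i (Fin.last k) h)).to_reflTransGen
  have hσBad : ∀ i, σ i ∈ {a | lin a s ∧ (M.lbl a).isSendFromTo p q ∧
      ¬ ∃ f, M.msg a f ∧ lin f s} := by
    intro i
    refine ⟨hσs i, hsend i, ?_⟩
    rintro ⟨f, hf, hfs⟩
    exact hnot (hlin.trans _ _ _
      (hlin.hb_le _ _ (Relation.ReflTransGen.mono (fun _ _ h => Or.inl h) _ _ (hmin i f hf))) hfs)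
  have hσinj : Function.Injective σ := by
    intro i j hij
    by_contra hne'
    rcases Ne.lt_or_gt hne' with h | h
    · have := chain_le M.next σ hchain i j h
      rw [hij] at this
      exact next_trans_irrefl hM _ this
    · have := chain_le M.next σ hchain j i h
      rw [hij] at this
      exact next_trans_irrefl hM _ this
  have hrange : (Set.range σ).ncard = k + 1 := by
    rw [← Set.image_univ, Set.ncard_image_of_injective _ hσinj, Set.ncard_univ]
    simp
  have hsub : (Set.range σ).ncard ≤ {a | lin a s ∧ (M.lbl a).isSendFromTo p q ∧
      ¬ ∃ f, M.msg a f ∧ lin f s}.ncard :=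
    Set.ncard_le_ncard (Set.range_subset_iff.mpr hσBad) (Set.toFinite _)
  have hcc := channel_card hM hlin s p q
  have hkbs := hkb s p q ms hms
  omega

end PreMSC

open PreMSC in
/-- For `k ≥ 1`, an MSC is existentially `k`-bounded iff
`≤ ∪ R_k` is acyclic and each channel `(p,q)` has at most `k` unmatched sends. -/
theorem existentiallyKBounded_iff {P Msg : Type} (M : PreMSC P Msg) (hM : M.IsMSC)
    (k : ℕ) (hk : 1 ≤ k) :
    (∃ lin, M.IsLin lin ∧ M.KBounded k lin) ↔
      ((∀ e, ¬ Relation.TransGen (fun a b => M.shb a b ∨ M.RkRel k a b) e e) ∧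
        M.UnmatchedBounded k) := by
  classical
  haveI := hM.finite
  constructor
  · rintro ⟨lin, hlin, hkb⟩
    constructor
    · intro e hcyc
      have hmono : ∀ a b, (M.shb a b ∨ M.RkRel k a b) → lin a b ∧ a ≠ b := by
        rintro a b (h | h)
        · refine ⟨hlin.hb_le _ _ h.to_reflTransGen, ?_⟩
          rintro rfl
          exact hM.hb_po a h
        · exact rk_lin_forward hM hlin hkb h
      have htr : Transitive (fun a b => lin a b ∧ a ≠ b) := by
        rintro a b c ⟨hab, hne1⟩ ⟨hbc, hne2⟩
        refine ⟨hlin.trans _ _ _ hab hbc, ?_⟩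
        rintro rfl
        exact hne1 (hlin.antisymm _ _ hab hbc)
      have h2 := Relation.TransGen.mono hmono _ _ hcyc
      haveI : IsTrans M.E (fun a b => lin a b ∧ a ≠ b) := ⟨htr⟩
      rw [Relation.transGen_eq_self] at h2
      exact h2.2 rfl
    · intro p q
      by_contra hU
      rw [not_le] at hU
      have hne : {e | (M.lbl e).isSendFromTo p q ∧ ¬ M.Matched e}.Nonempty :=
        Set.nonempty_of_ncard_ne_zero (by omega)
      obtain ⟨m, hm, hmax⟩ := exists_min_of_finite (fun a b => lin b a)
        (fun a b c h h' => hlin.trans _ _ _ h' h) (Set.toFinite _) hne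
        (fun a _ b _ _ => hlin.total b a)
      obtain ⟨mm, hmm⟩ := hm.1
      have hcc := channel_card hM hlin m p q
      have hkbm := hkb m p q mm hmm
      have hsubU : {e | (M.lbl e).isSendFromTo p q ∧ ¬ M.Matched e}.ncard ≤
          {a | lin a m ∧ (M.lbl a).isSendFromTo p q ∧
            ¬ ∃ f, M.msg a f ∧ lin f m}.ncard := by
        apply Set.ncard_le_ncard _ (Set.toFinite _)
        rintro x ⟨hx1, hx2⟩
        refine ⟨?_, hx1, ?_⟩
        · rcases hmax x ⟨hx1, hx2⟩ with rfl | h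
          · exact hlin.refl _
          · exact h
        · rintro ⟨f, hf, -⟩
          exact hx2 ⟨f, hf⟩
      omega
  · rintro ⟨hac, hub⟩
    haveI hpo : IsPartialOrder M.E
        (fun a b => a = b ∨ Relation.TransGen (fun a b => M.shb a b ∨ M.RkRel k a b) a b) :=
      { refl := fun a => Or.inl rfl
        trans := by
          rintro a b c (rfl | h) h'
          · exact h'
          · rcases h' with rfl | h'
            · exact Or.inr h
            · exact Or.inr (h.trans h')
        antisymm := by
          rintro a b (rfl | h) h'
          · rfl
          · rcases h' with rfl | h'
            · rfl
            · exact absurd (h.trans h') (hac a) }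
    obtain ⟨lin, hlinord, hsub⟩ := extend_partialOrder
      (fun a b => a = b ∨ Relation.TransGen (fun a b => M.shb a b ∨ M.RkRel k a b) a b)
    haveI := hlinord
    have hlin : M.IsLin lin :=
      { refl := fun e => refl_of lin e
        trans := fun a b c => trans_of lin
        antisymm := fun a b => antisymm_of lin
        total := fun a b => total_of lin a b
        hb_le := by
          intro a b h
          rcases Relation.reflTransGen_iff_eq_or_transGen.mp h with rfl | h
          · exact refl_of lin _
          · exact hsub _ _ (Or.inr (Relation.TransGen.single (Or.inl h))) }
    refine ⟨lin, hlin, ?_⟩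
    intro e p q m hme
    have hcc := channel_card hM hlin e p q
    have hBad : {a | lin a e ∧ (M.lbl a).isSendFromTo p q ∧
        ¬ ∃ f, M.msg a f ∧ lin f e}.ncard ≤ k := by
      by_contra hbad
      rw [not_le] at hbad
      obtain ⟨l, hl, hlS, hchain⟩ := exists_chain_list (Relation.TransGen M.next)
        (fun a b c h h' => h.trans h') (k + 1)
        {a | lin a e ∧ (M.lbl a).isSendFromTo p q ∧ ¬ ∃ f, M.msg a f ∧ lin f e}
        (Set.toFinite _)
        (fun a ha b hb hab => by
          obtain ⟨ma, hma⟩ := ha.2.1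
          obtain ⟨mb, hmb⟩ := hb.2.1
          exact hM.proc_total a b (by rw [hma, hmb]; rfl) hab)
        (by omega)
      set σ : Fin (k + 1) → M.E := fun i => l.get (Fin.cast hl.symm i) with hσdef
      have hσS : ∀ i, σ i ∈ {a | lin a e ∧ (M.lbl a).isSendFromTo p q ∧
          ¬ ∃ f, M.msg a f ∧ lin f e} := fun i => hlS _ (l.get_mem _)
      have hconsec : ∀ i : Fin k, Relation.TransGen M.next (σ i.castSucc) (σ i.succ) := by
        intro i
        have hlen : i.val < l.length - 1 := by
          rw [hl]
          omega
        exact List.isChain_iff_getElem.mp hchain i.val (by omega)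
      have hmatch : ∃ i, M.Matched (σ i) := by
        by_contra hall
        push_neg at hall
        have hrsub : Set.range σ ⊆ {e | (M.lbl e).isSendFromTo p q ∧ ¬ M.Matched e} :=
          Set.range_subset_iff.mpr fun i => ⟨(hσS i).2.1, hall i⟩
        have hσinj : Function.Injective σ := by
          intro i j hij
          by_contra hne'
          rcases Ne.lt_or_gt hne' with h | h
          · have := chain_le M.next σ hconsec i j h
            rw [hij] at this
            exact next_trans_irrefl hM _ this
          · have := chain_le M.next σ hconsec j i h
            rw [hij] at this
            exact next_trans_irrefl hM _ this
        have hrange : (Set.range σ).ncard = k + 1 := by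
          rw [← Set.image_univ, Set.ncard_image_of_injective _ hσinj, Set.ncard_univ]
          simp
        have h2 := Set.ncard_le_ncard hrsub (Set.toFinite _)
        have h3 := hub p q
        omega
      obtain ⟨i₁, hmat₁⟩ := hmatch
      obtain ⟨f₁, hf₁⟩ := hmat₁
      obtain ⟨r, hrRR, hrmin⟩ := exists_min_of_finite (Relation.TransGen M.next)
        (fun a b c h h' => h.trans h') (Set.toFinite {f | ∃ i, M.msg (σ i) f})
        ⟨f₁, i₁, hf₁⟩
        (fun a ha b hb hab => by
          obtain ⟨ia, hia⟩ := ha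
          obtain ⟨ib, hib⟩ := hb
          obtain ⟨pa, qa, msga, hsa, hra⟩ := hM.msg_lbl _ _ hia
          obtain ⟨pb, qb, msgb, hsb, hrb⟩ := hM.msg_lbl _ _ hib
          obtain ⟨ma', hma'⟩ := (hσS ia).2.1
          obtain ⟨mb', hmb'⟩ := (hσS ib).2.1
          rw [hma'] at hsa
          rw [hmb'] at hsb
          simp only [Action.send.injEq] at hsa hsb
          apply hM.proc_total a b _ hab
          rw [hra, hrb]
          show qa = qb
          rw [← hsa.2.1, ← hsb.2.1])
      have hRk : M.RkRel k r (σ (Fin.last k)) := by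
        refine ⟨p, q, σ, rfl, hconsec, fun i => (hσS i).2.1, ⟨i₁, f₁, hf₁⟩, hrRR, ?_⟩
        intro i f hf
        rcases hrmin f ⟨i, hf⟩ with rfl | h
        · exact Relation.ReflTransGen.refl
        · exact h.to_reflTransGen
      have hlinr : lin r (σ (Fin.last k)) :=
        hsub _ _ (Or.inr (Relation.TransGen.single (Or.inr hRk)))
      have hline : lin r e := hlin.trans _ _ _ hlinr (hσS (Fin.last k)).1
      obtain ⟨i₂, hi₂⟩ := hrRR
      exact (hσS i₂).2.2 ⟨r, hi₂, hline⟩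
    omega

end MSCPaper
end

section
/- Let k ≥ 1. An MSC M is universally k-bounded (all of its linearizations are k-bounded) if and only if R_k ⊆ ≤ and, for each pair of processes (p,q), there are at most k unmatched send events whose action is a send from p to q. -/
namespace MSCPaper


section Helpers

open Relation

variable {P Msg : Type} {M : PreMSC P Msg}

/-- A strict partial order, total on a finite set, has a minimum of the set. -/
lemma exists_min_rel {E : Type} [Finite E] (lt : E → E → Prop)
    (htr : ∀ {a b c}, lt a b → lt b c → lt a c) (hirr : ∀ e, ¬ lt e e)
    (T : Set E) (hne : T.Nonempty)
    (htot : ∀ a, a ∈ T → ∀ b, b ∈ T → a ≠ b → lt a b ∨ lt b a) :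
    ∃ m ∈ T, ∀ f ∈ T, f ≠ m → lt m f := by
  haveI : IsTrans E lt := ⟨fun _ _ _ => htr⟩
  haveI : IsIrrefl E lt := ⟨hirr⟩
  obtain ⟨m, hm, hmin⟩ := (Finite.wellFounded_of_trans_of_irrefl lt).has_min T hne
  refine ⟨m, hm, fun f hf hne' => ?_⟩
  exact (htot m hm f hf (Ne.symm hne')).resolve_right (hmin f hf)

/-- Extract a strictly increasing chain of length `n+1` from a finite set of
size at least `n+1` on which a strict order is total. -/
lemma exists_chain_rel {E : Type} [Finite E] (lt : E → E → Prop)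
    (htr : ∀ {a b c}, lt a b → lt b c → lt a c) (hirr : ∀ e, ¬ lt e e) :
    ∀ (n : ℕ) (T : Set E),
      (∀ a, a ∈ T → ∀ b, b ∈ T → a ≠ b → lt a b ∨ lt b a) →
      n + 1 ≤ T.ncard →
      ∃ σ : Fin (n + 1) → E, (∀ i, σ i ∈ T) ∧
        ∀ i : Fin n, lt (σ i.castSucc) (σ i.succ) := by
  intro n
  induction n with
  | zero =>
    intro T htot hcard
    obtain ⟨x, hx⟩ := (Set.ncard_pos (Set.toFinite T)).mp (by omega)
    exact ⟨fun _ => x, fun _ => hx, fun i => i.elim0⟩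
  | succ n ih =>
    intro T htot hcard
    have hne : T.Nonempty := (Set.ncard_pos (Set.toFinite T)).mp (by omega)
    obtain ⟨m, hm, hmin⟩ := exists_min_rel lt htr hirr T hne htot
    have hcard' : n + 1 ≤ (T \ {m}).ncard := by
      have := Set.ncard_diff_singleton_of_mem hm
      omega
    obtain ⟨σ', hσ'T, hσ'c⟩ := ih (T \ {m})
      (fun a ha b hb => htot a ha.1 b hb.1) hcard'
    refine ⟨Fin.cons m σ', ?_, ?_⟩
    · intro i
      refine Fin.cases ?_ (fun j => ?_) i
      · simpa using hm
      · simpa using (hσ'T j).1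
    · intro i
      refine Fin.cases ?_ (fun j => ?_) i
      · have h0 := hσ'T 0
        have : σ' 0 ≠ m := fun h => h0.2 (by simp [h])
        simpa using hmin (σ' 0) h0.1 this
      · have := hσ'c j
        simpa [← Fin.succ_castSucc] using this

/-- Chains are strictly increasing globally. -/
lemma chain_lt_of_lt {E : Type} (lt : E → E → Prop)
    (htr : ∀ {a b c}, lt a b → lt b c → lt a c) {n : ℕ}
    (σ : Fin (n + 1) → E) (hc : ∀ i : Fin n, lt (σ i.castSucc) (σ i.succ)) :
    ∀ i j : Fin (n + 1), i < j → lt (σ i) (σ j) := by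
  have key : ∀ d i : ℕ, ∀ h : i + d + 1 < n + 1,
      lt (σ ⟨i, by omega⟩) (σ ⟨i + d + 1, h⟩) := by
    intro d
    induction d with
    | zero =>
      intro i h
      have := hc ⟨i, by omega⟩
      simpa [Fin.castSucc, Fin.castAdd, Fin.castLE, Fin.succ] using this
    | succ d ihd =>
      intro i h
      refine htr (ihd i (by omega)) ?_
      have := hc ⟨i + d + 1, by omega⟩
      have h2 : i + (d + 1) + 1 = i + d + 1 + 1 := by omega
      simp only [Fin.castSucc, Fin.castAdd, Fin.castLE, Fin.succ] at this ⊢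
      convert this using 2
      exact Fin.ext h2
  intro i j hij
  have hj : j.val = i.val + (j.val - i.val - 1) + 1 := by
    have := hij
    rw [Fin.lt_def] at this
    omega
  have := key (j.val - i.val - 1) i.val (by omega)
  have e1 : (⟨i.val, by omega⟩ : Fin (n + 1)) = i := rfl
  have e2 : (⟨i.val + (j.val - i.val - 1) + 1, by omega⟩ : Fin (n + 1)) = j :=
    Fin.ext (by simp only [Fin.val_mk]; omega)
  rwa [e1, e2] at this

namespace PreMSC

lemma IsMSC.nextT_trans {a b c : M.E} (_hM : M.IsMSC)
    (h1 : Relation.TransGen M.next a b) (h2 : Relation.TransGen M.next b c) :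
    Relation.TransGen M.next a c := h1.trans h2

lemma IsMSC.nextT_irrefl (hM : M.IsMSC) (e : M.E) :
    ¬ Relation.TransGen M.next e e :=
  fun h => hM.hb_po e (Relation.TransGen.mono (fun _ _ hn => Or.inl hn) _ _ h)

lemma IsMSC.hb_of_nextT (_hM : M.IsMSC) {a b : M.E}
    (h : Relation.TransGen M.next a b) : M.hb a b :=
  (Relation.TransGen.mono (fun _ _ hn => Or.inl hn) _ _ h).to_reflTransGen

lemma IsMSC.hb_of_msg (_hM : M.IsMSC) {a b : M.E} (h : M.msg a b) : M.hb a b :=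
  Relation.ReflTransGen.single (Or.inr h)

lemma exec_eq_of_isSendFromTo {p q : P} {f : M.E}
    (h : (M.lbl f).isSendFromTo p q) : (M.lbl f).exec = p := by
  obtain ⟨m, hm⟩ := h; rw [hm]; rfl

lemma exec_eq_of_isRecvFromTo {p q : P} {f : M.E}
    (h : (M.lbl f).isRecvFromTo p q) : (M.lbl f).exec = q := by
  obtain ⟨m, hm⟩ := h; rw [hm]; rfl

lemma IsMSC.msg_recvFromTo (hM : M.IsMSC) {p q : P} {s r : M.E}
    (hmsg : M.msg s r) (hs : (M.lbl s).isSendFromTo p q) :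
    (M.lbl r).isRecvFromTo p q := by
  obtain ⟨p', q', m', h1, h2⟩ := hM.msg_lbl s r hmsg
  obtain ⟨m, hm⟩ := hs
  rw [hm] at h1
  obtain ⟨rfl, rfl, rfl⟩ : p = p' ∧ q = q' ∧ m = m' := by
    cases h1; exact ⟨rfl, rfl, rfl⟩
  exact ⟨m, h2⟩

lemma IsMSC.msg_sendFromTo (hM : M.IsMSC) {p q : P} {s r : M.E}
    (hmsg : M.msg s r) (hr : (M.lbl r).isRecvFromTo p q) :
    (M.lbl s).isSendFromTo p q := by
  obtain ⟨p', q', m', h1, h2⟩ := hM.msg_lbl s r hmsg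
  obtain ⟨m, hm⟩ := hr
  rw [hm] at h2
  obtain ⟨rfl, rfl, rfl⟩ : p = p' ∧ q = q' ∧ m = m' := by
    cases h2; exact ⟨rfl, rfl, rfl⟩
  exact ⟨m, h1⟩

/-- Exists a linearization extending happens-before plus extra constraints,
provided the union is acyclic. -/
lemma IsMSC.exists_lin_extending (_hM : M.IsMSC) (c : M.E → M.E → Prop)
    (hc : ∀ e, ¬ Relation.TransGen (fun a b => M.step a b ∨ c a b) e e) :
    ∃ lin, M.IsLin lin ∧ ∀ a b, c a b → lin a b := by
  set st : M.E → M.E → Prop := fun a b => M.step a b ∨ c a b with hst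
  set r : M.E → M.E → Prop := Relation.ReflTransGen st with hr
  haveI : IsRefl M.E r := ⟨fun _ => Relation.ReflTransGen.refl⟩
  haveI : IsTrans M.E r := ⟨fun _ _ _ h1 h2 => h1.trans h2⟩
  haveI : IsAntisymm M.E r := by
    constructor
    intro a b h1 h2
    rcases Relation.reflTransGen_iff_eq_or_transGen.mp h1 with h | h1'
    · exact h.symm
    rcases Relation.reflTransGen_iff_eq_or_transGen.mp h2 with h | h2'
    · exact h
    exact absurd (h1'.trans h2') (hc a)
  haveI : IsPartialOrder M.E r := { }
  obtain ⟨lin, hlin, hle⟩ := extend_partialOrder r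
  haveI := hlin
  refine ⟨lin, ⟨fun e => refl_of lin e, fun a b c' h1 h2 => trans_of lin h1 h2,
    fun a b h1 h2 => antisymm_of lin h1 h2, fun a b => total_of lin a b, ?_⟩, ?_⟩
  · intro a b h
    exact hle _ _ (Relation.ReflTransGen.mono (fun _ _ hs => Or.inl hs) _ _ h)
  · intro a b h
    exact hle _ _ (Relation.ReflTransGen.single (Or.inr h))

/-- Key counting lemma: if `X` is a set of sends `lin`-before `e` on channel
`(p,q)` none of whose receives is `lin`-before `e`, then
`#recvs + #X ≤ #sends` (counting events `lin`-before `e` on the channel). -/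
lemma IsMSC.key_count (hM : M.IsMSC) {lin : M.E → M.E → Prop} (hlin : M.IsLin lin)
    (e : M.E) (p q : P) (X : Set M.E)
    (hX : X ⊆ {f | lin f e ∧ (M.lbl f).isSendFromTo p q})
    (hXnm : ∀ g ∈ X, ∀ f, M.msg g f → ¬ lin f e) :
    Set.ncard {f | lin f e ∧ (M.lbl f).isRecvFromTo p q} + X.ncard ≤
      Set.ncard {f | lin f e ∧ (M.lbl f).isSendFromTo p q} := by
  haveI : Finite M.E := hM.finite
  set S' := {f | lin f e ∧ (M.lbl f).isSendFromTo p q} with hS'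
  set R' := {f | lin f e ∧ (M.lbl f).isRecvFromTo p q} with hR'
  classical
  set F : M.E → M.E := fun f => if h : ∃ g, M.msg g f then h.choose else f with hF
  have hFmsg : ∀ f ∈ R', M.msg (F f) f := by
    intro f hf
    have hrecv : (M.lbl f).isRecv := by
      obtain ⟨m, hm⟩ := hf.2; exact ⟨p, q, m, hm⟩
    obtain ⟨g, hg, _⟩ := hM.recv_matched f hrecv
    have hex : ∃ g, M.msg g f := ⟨g, hg⟩
    simp only [hF, dif_pos hex]
    exact hex.choose_spec
  have hmaps : ∀ f ∈ R', F f ∈ S' \ X := by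
    intro f hf
    have hmsg := hFmsg f hf
    have hhb : M.hb (F f) f := hM.hb_of_msg hmsg
    have hlinFe : lin (F f) e := hlin.trans _ _ _ (hlin.hb_le _ _ hhb) hf.1
    have hsend : (M.lbl (F f)).isSendFromTo p q := hM.msg_sendFromTo hmsg hf.2
    refine ⟨⟨hlinFe, hsend⟩, fun hmem => ?_⟩
    exact hXnm (F f) hmem f hmsg hf.1
  have hinj : Set.InjOn F R' := by
    intro f1 h1 f2 h2 heq
    have hm1 := hFmsg f1 h1
    have hm2 := hFmsg f2 h2
    rw [heq] at hm1
    exact hM.msg_functional (F f2) f1 f2 hm1 hm2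
  have h1 : R'.ncard ≤ (S' \ X).ncard :=
    Set.ncard_le_ncard_of_injOn F hmaps hinj (Set.toFinite _)
  have h2 : (S' \ X).ncard + X.ncard = S'.ncard :=
    Set.ncard_diff_add_ncard_of_subset hX (Set.toFinite _)
  omega

/-- Decomposition of paths in happens-before augmented with one extra edge. -/
lemma aug_decomp (M : PreMSC P Msg) (s r : M.E) :
    ∀ {x y : M.E}, Relation.TransGen (fun a b => M.step a b ∨ (a = s ∧ b = r)) x y →
      Relation.TransGen M.step x y ∨ (M.hb x s ∧ M.hb r y) := by
  intro x y h
  induction h using Relation.TransGen.head_induction_on with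
  | single h =>
    rcases h with h | ⟨rfl, rfl⟩
    · exact Or.inl (Relation.TransGen.single h)
    · exact Or.inr ⟨Relation.ReflTransGen.refl, Relation.ReflTransGen.refl⟩
  | head hac hcb ihc =>
    rcases hac with h | ⟨rfl, rfl⟩
    · rcases ihc with h2 | ⟨hcs, hry⟩
      · exact Or.inl (Relation.TransGen.head h h2)
      · exact Or.inr ⟨Relation.ReflTransGen.head h hcs, hry⟩
    · rcases ihc with h2 | ⟨_, hry⟩
      · exact Or.inr ⟨Relation.ReflTransGen.refl, h2.to_reflTransGen⟩
      · exact Or.inr ⟨Relation.ReflTransGen.refl, hry⟩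

end PreMSC

end Helpers

/-- For `k ≥ 1`, an MSC is universally `k`-bounded (all of its
linearizations are `k`-bounded) iff `R_k ⊆ ≤` and each channel `(p,q)` has at
most `k` unmatched sends. -/
theorem universallyKBounded_iff {P Msg : Type} (M : PreMSC P Msg) (hM : M.IsMSC)
    (k : ℕ) (hk : 1 ≤ k) :
    (∀ lin, M.IsLin lin → M.KBounded k lin) ↔
      ((∀ r s, M.RkRel k r s → M.hb r s) ∧ M.UnmatchedBounded k) := by
  haveI : Finite M.E := hM.finite
  have htr : ∀ {a b c : M.E}, Relation.TransGen M.next a b →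
      Relation.TransGen M.next b c → Relation.TransGen M.next a c :=
    fun h1 h2 => h1.trans h2
  have hirr := hM.nextT_irrefl
  constructor
  · intro hall
    constructor
    · -- R_k ⊆ hb
      rintro r s hrs
      by_contra hnrs
      obtain ⟨p, q, σ, hlast, hchain, hlbls, hmat, ⟨i₀, hi₀⟩, hminrec⟩ := hrs
      have hacyc : ∀ e, ¬ Relation.TransGen
          (fun a b => M.step a b ∨ (a = s ∧ b = r)) e e := by
        intro e he
        rcases M.aug_decomp s r he with h | ⟨h1, h2⟩
        · exact hM.hb_po e h
        · exact hnrs (h2.trans h1)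
      obtain ⟨lin, hlin, hext⟩ := hM.exists_lin_extending _ hacyc
      have hlinsr : lin s r := hext s r ⟨rfl, rfl⟩
      have hrrecv : (M.lbl r).isRecvFromTo p q := hM.msg_recvFromTo hi₀ (hlbls i₀)
      obtain ⟨m, hm⟩ := hlbls (Fin.last k)
      have hchainlt := chain_lt_of_lt (Relation.TransGen M.next) htr σ hchain
      have hinj : Function.Injective σ := by
        intro i j hij
        by_contra hne
        rcases lt_or_gt_of_ne hne with h | h
        · exact hirr _ (hij ▸ hchainlt i j h)
        · exact hirr _ (hij ▸ hchainlt j i h)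
      have hX : Set.range σ ⊆ {f | lin f s ∧ (M.lbl f).isSendFromTo p q} := by
        rintro _ ⟨i, rfl⟩
        refine ⟨?_, hlbls i⟩
        rcases eq_or_lt_of_le (Fin.le_last i) with h | h
        · rw [h, hlast]; exact hlin.refl s
        · have h1 := hM.hb_of_nextT (hchainlt i (Fin.last k) h)
          rw [hlast] at h1
          exact hlin.hb_le _ _ h1
      have hXnm : ∀ g ∈ Set.range σ, ∀ f, M.msg g f → ¬ lin f s := by
        rintro _ ⟨i, rfl⟩ f hmsg hlinfs
        have hrf : M.hb r f :=
          Relation.ReflTransGen.mono (fun _ _ h => Or.inl h) _ _ (hminrec i f hmsg)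
        have hlinrs : lin r s := hlin.trans _ _ _ (hlin.hb_le _ _ hrf) hlinfs
        have hrseq : r = s := hlin.antisymm _ _ hlinrs hlinsr
        obtain ⟨m', hm'⟩ := hrrecv
        have hms : M.lbl s = Action.send p q m := hlast ▸ hm
        rw [hrseq, hms] at hm'
        cases hm'
      have hcard : (Set.range σ).ncard = k + 1 := by
        rw [← Set.image_univ, Set.ncard_image_of_injective _ hinj, Set.ncard_univ]
        simp
      have hkey := hM.key_count hlin s p q (Set.range σ) hX hXnm
      have hKB := hall lin hlin s p q m (hlast ▸ hm)
      rw [hcard] at hkey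
      omega
    · -- unmatched sends bounded
      intro p q
      by_contra hU
      push_neg at hU
      set U := {f | (M.lbl f).isSendFromTo p q ∧ ¬ M.Matched f} with hUdef
      have hUne : U.Nonempty := (Set.ncard_pos (Set.toFinite U)).mp (by omega)
      have htotU : ∀ a, a ∈ U → ∀ b, b ∈ U → a ≠ b →
          Function.swap (Relation.TransGen M.next) a b ∨
            Function.swap (Relation.TransGen M.next) b a := by
        intro a ha b hb hne
        have := hM.proc_total a b (by
          rw [PreMSC.exec_eq_of_isSendFromTo ha.1, PreMSC.exec_eq_of_isSendFromTo hb.1]) hne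
        exact this.symm
      obtain ⟨e0, he0, hmax⟩ := exists_min_rel (Function.swap (Relation.TransGen M.next))
        (fun h1 h2 => h2.trans h1) hirr U hUne htotU
      obtain ⟨lin, hlin, _⟩ := hM.exists_lin_extending (fun _ _ => False) (by
        intro e he
        exact hM.hb_po e (Relation.TransGen.mono (fun a b h => Or.resolve_right h id) _ _ he))
      have hX : U ⊆ {f | lin f e0 ∧ (M.lbl f).isSendFromTo p q} := by
        intro f hf
        refine ⟨?_, hf.1⟩
        by_cases hfe : f = e0
        · rw [hfe]; exact hlin.refl e0
        · exact hlin.hb_le _ _ (hM.hb_of_nextT (hmax f hf hfe))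
      have hXnm : ∀ g ∈ U, ∀ f, M.msg g f → ¬ lin f e0 := by
        intro g hg f hmsg _
        exact hg.2 ⟨f, hmsg⟩
      have hkey := hM.key_count hlin e0 p q U hX hXnm
      obtain ⟨m, hm⟩ := he0.1
      have hKB := hall lin hlin e0 p q m hm
      omega
  · rintro ⟨hRk, hUB⟩ lin hlin e p q m hlbl
    classical
    set S' := {f | lin f e ∧ (M.lbl f).isSendFromTo p q} with hS'
    set R' := {f | lin f e ∧ (M.lbl f).isRecvFromTo p q} with hR'
    set B := {f | f ∈ S' ∧ ¬ ∃ r, M.msg f r ∧ r ∈ R'} with hBdef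
    set G : M.E → M.E := fun g => if h : ∃ r, M.msg g r then h.choose else g with hG
    have hGmsg : ∀ f : M.E, M.Matched f → M.msg f (G f) := by
      rintro f ⟨r, hr⟩
      have hex : ∃ r, M.msg f r := ⟨r, hr⟩
      simp only [hG, dif_pos hex]
      exact hex.choose_spec
    have hmsgG : ∀ f ∈ S' \ B, M.msg f (G f) ∧ G f ∈ R' := by
      intro f hf
      have hex : ∃ r, M.msg f r ∧ r ∈ R' := by
        by_contra hne; exact hf.2 ⟨hf.1, hne⟩
      obtain ⟨r, hmsg, hrR⟩ := hex
      have hGf : M.msg f (G f) := hGmsg f ⟨r, hmsg⟩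
      have heq : G f = r := hM.msg_functional f _ _ hGf hmsg
      exact ⟨hGf, heq ▸ hrR⟩
    have hinjG : Set.InjOn G (S' \ B) := by
      intro f1 h1 f2 h2 heq
      have hm1 := (hmsgG f1 h1).1
      have hm2 := (hmsgG f2 h2).1
      rw [heq] at hm1
      have hrecv : (M.lbl (G f2)).isRecv := by
        obtain ⟨p', q', m', _, h⟩ := hM.msg_lbl f2 (G f2) hm2
        exact ⟨p', q', m', h⟩
      obtain ⟨g, _, huniq⟩ := hM.recv_matched (G f2) hrecv
      rw [huniq f1 hm1, huniq f2 hm2]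
    have hcount1 : S'.ncard ≤ R'.ncard + B.ncard := by
      have hsub : S' ⊆ (S' \ B) ∪ B := by
        intro f hf
        by_cases h : f ∈ B
        · exact Or.inr h
        · exact Or.inl ⟨hf, h⟩
      have h1 := Set.ncard_le_ncard hsub (Set.toFinite _)
      have h2 := Set.ncard_union_le (S' \ B) B
      have h3 : (S' \ B).ncard ≤ R'.ncard :=
        Set.ncard_le_ncard_of_injOn G (fun f hf => (hmsgG f hf).2) hinjG (Set.toFinite _)
      omega
    have hcount2 : B.ncard ≤ k := by
      by_contra hBk
      push_neg at hBk
      have htotB : ∀ a, a ∈ B → ∀ b, b ∈ B → a ≠ b →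
          Relation.TransGen M.next a b ∨ Relation.TransGen M.next b a := by
        intro a ha b hb hne
        exact hM.proc_total a b (by
          rw [PreMSC.exec_eq_of_isSendFromTo ha.1.2,
            PreMSC.exec_eq_of_isSendFromTo hb.1.2]) hne
      obtain ⟨σ, hσB, hσc⟩ := exists_chain_rel (Relation.TransGen M.next) htr hirr k B htotB (by omega)
      by_cases hmat : ∃ i, M.Matched (σ i)
      · set T := {f | ∃ i, M.msg (σ i) f} with hT
        have hTne : T.Nonempty := by
          obtain ⟨i, r, hr⟩ := hmat; exact ⟨r, i, hr⟩
        have htotT : ∀ a, a ∈ T → ∀ b, b ∈ T → a ≠ b →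
            Relation.TransGen M.next a b ∨ Relation.TransGen M.next b a := by
          rintro a ⟨i, hi⟩ b ⟨j, hj⟩ hne
          have ha := hM.msg_recvFromTo hi (hσB i).1.2
          have hb := hM.msg_recvFromTo hj (hσB j).1.2
          exact hM.proc_total a b (by
            rw [PreMSC.exec_eq_of_isRecvFromTo ha, PreMSC.exec_eq_of_isRecvFromTo hb]) hne
        obtain ⟨r, hrT, hrmin⟩ := exists_min_rel (Relation.TransGen M.next) htr hirr T hTne htotT
        have hminrec : ∀ i f, M.msg (σ i) f → Relation.ReflTransGen M.next r f := by
          intro i f hf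
          by_cases h : f = r
          · rw [h]
          · exact (hrmin f ⟨i, hf⟩ h).to_reflTransGen
        have hhb : M.hb r (σ (Fin.last k)) :=
          hRk _ _ ⟨p, q, σ, rfl, hσc, fun i => (hσB i).1.2, hmat, hrT, hminrec⟩
        obtain ⟨ir, hir⟩ := hrT
        have hrR' : r ∈ R' :=
          ⟨hlin.trans _ _ _ (hlin.hb_le _ _ hhb) (hσB (Fin.last k)).1.1,
            hM.msg_recvFromTo hir (hσB ir).1.2⟩
        exact (hσB ir).2 ⟨r, hir, hrR'⟩
      · push_neg at hmat
        have hchainlt := chain_lt_of_lt (Relation.TransGen M.next) htr σ hσc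
        have hinj : Function.Injective σ := by
          intro i j hij
          by_contra hne
          rcases lt_or_gt_of_ne hne with h | h
          · exact hirr _ (hij ▸ hchainlt i j h)
          · exact hirr _ (hij ▸ hchainlt j i h)
        have hsub : Set.range σ ⊆ {f | (M.lbl f).isSendFromTo p q ∧ ¬ M.Matched f} := by
          rintro _ ⟨i, rfl⟩
          exact ⟨(hσB i).1.2, hmat i⟩
        have hcard : (Set.range σ).ncard = k + 1 := by
          rw [← Set.image_univ, Set.ncard_image_of_injective _ hinj, Set.ncard_univ]
          simp
        have hle := Set.ncard_le_ncard hsub (Set.toFinite _)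
        have := hUB p q
        omega
    omega


end MSCPaper
end

section
/- Every 1-n-prefix of a 1-n MSC is a 1-n MSC. -/
namespace MSCPaper

section Aux

variable {P Msg : Type} {M : PreMSC P Msg} {S : Set M.E}

lemma hb_mem_aux (hS : M.OneNDownClosed S) {e f : M.E} (h : M.hb e f) (hf : f ∈ S) :
    e ∈ S := by
  refine hS e f ?_ hf
  exact Relation.ReflTransGen.mono (r := M.step) (p := M.onenStep) (fun a b (hab : M.step a b) => hab.imp id Or.inl) _ _ h

lemma next_trans_proj {a b : (M.restrict S).E}
    (h : Relation.TransGen (M.restrict S).next a b) :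
    Relation.TransGen M.next a.val b.val :=
  h.lift Subtype.val (fun _ _ hab => hab)

lemma step_trans_proj {a b : (M.restrict S).E}
    (h : Relation.TransGen (M.restrict S).step a b) :
    Relation.TransGen M.step a.val b.val :=
  Relation.TransGen.lift (r := (M.restrict S).step) (p := M.step) Subtype.val (fun _ _ hab => hab) _ _ h

lemma next_trans_lift (hS : M.OneNDownClosed S) {a b : M.E}
    (h : Relation.TransGen M.next a b) (hb : b ∈ S) :
    ∀ ha : a ∈ S, Relation.TransGen (M.restrict S).next ⟨a, ha⟩ ⟨b, hb⟩ := by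
  induction h using Relation.TransGen.head_induction_on with
  | single hnext => exact fun ha => Relation.TransGen.single hnext
  | head hnext htg ih =>
      intro ha
      rename_i a c
      have hc : c ∈ S := hb_mem_aux hS
        (Relation.TransGen.to_reflTransGen
          (Relation.TransGen.mono (fun _ _ h => (Or.inl h : M.step _ _)) _ _ htg)) hb
      exact Relation.TransGen.head (show (M.restrict S).next ⟨a, ha⟩ ⟨c, hc⟩ from hnext) (ih hc)

end Aux

/-- Every 1-n-prefix (restriction to a `⪯_1n`-downward-closed set
of events) of a 1-n MSC is a 1-n MSC. -/
theorem oneN_prefix_isOneN {P Msg : Type} (M : PreMSC P Msg) (hM : M.IsMSC)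
    (h : M.IsOneN) (S : Set M.E) (hS : M.OneNDownClosed S) :
    (M.restrict S).IsMSC ∧ (M.restrict S).IsOneN := by
  have hfin : Finite M.E := hM.finite
  constructor
  · constructor
    · exact Subtype.finite
    · exact fun e f hef => hM.next_exec e.val f.val hef
    · intro e f hexec hne
      have hne' : e.val ≠ f.val := fun hv => hne (Subtype.ext hv)
      rcases hM.proc_total e.val f.val hexec hne' with htg | htg
      · exact Or.inl (next_trans_lift hS htg f.2 e.2)
      · exact Or.inr (next_trans_lift hS htg e.2 f.2)
    · intro e f hef ⟨g, hg1, hg2⟩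
      exact hM.next_cover e.val f.val hef ⟨g.val, next_trans_proj hg1, next_trans_proj hg2⟩
    · exact fun e f hef => hM.msg_lbl e.val f.val hef
    · intro f hf
      obtain ⟨e, he, huniq⟩ := hM.recv_matched f.val hf
      have heS : e ∈ S := hb_mem_aux hS (Relation.ReflTransGen.single (Or.inr he)) f.2
      exact ⟨⟨e, heS⟩, he, fun e' he' => Subtype.ext (huniq e'.val he')⟩
    · exact fun e f f' h1 h2 => Subtype.ext (hM.msg_functional e.val f.val f'.val h1 h2)
    · intro e he
      exact hM.hb_po e.val (step_trans_proj he)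
  · obtain ⟨lin, hlin, hcond⟩ := h
    refine ⟨fun a b => lin a.val b.val, ?_, ?_⟩
    · constructor
      · exact fun e => hlin.refl e.val
      · exact fun e f g => hlin.trans e.val f.val g.val
      · exact fun e f h1 h2 => Subtype.ext (hlin.antisymm e.val f.val h1 h2)
      · exact fun e f => hlin.total e.val f.val
      · intro e f hef
        exact hlin.hb_le e.val f.val
          (Relation.ReflTransGen.lift (r := (M.restrict S).step) (p := M.step) Subtype.val (fun _ _ hab => hab) _ _ hef)
    · intro s s' hs hs' hexec htg
      have htg' : Relation.TransGen M.next s.val s'.val := next_trans_proj htg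
      rcases hcond s.val s'.val hs hs' hexec htg' with ⟨r, r', hr, hr', hrr'⟩ | hunm
      · by_cases hr'S : r' ∈ S
        · have hrel : M.onenRel r r' :=
            Or.inr ⟨s.val, s'.val, hr, hr', hexec, htg'⟩
          have hrS : r ∈ S := hS r r'
            (Relation.ReflTransGen.single (Or.inr (Or.inr hrel))) hr'S
          exact Or.inl ⟨⟨r, hrS⟩, ⟨r', hr'S⟩, hr, hr', hrr'⟩
        · refine Or.inr ?_
          rintro ⟨f, hf⟩
          exact hr'S (hM.msg_functional s'.val f.val r' hf hr' ▸ f.2)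
      · refine Or.inr ?_
        rintro ⟨f, hf⟩
        exact hunm ⟨f.val, hf⟩

end MSCPaper
end
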